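/- arXiv:2407.12311 — 7 statements merged into one kernel-verified Lean document; each statement's English description precedes it below -/
import Mathlib

section
/- Let u ∈ X_JK and let p be a positive integer. Then ‖u‖_{2p,h}^{2p} ≤ (p²/8) · ‖u‖_{2(p−1),h}^{2(p−1)} · ‖δ⁺u‖²_{2,h}. -/
noncomputable section

open Finset Complex ComplexConjugate

/-- Membership in the space `X_JK`: complex arrays vanishing on the boundary of the grid. -/
def memX (J K : ℕ) (u : ℕ → ℕ → ℂ) : Prop :=
  (∀ k, u 0 k = 0) ∧ (∀ k, u J k = 0) ∧ (∀ j, u j 0 = 0) ∧ (∀ j, u j K = 0)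

/-- `normP Δx Δy J K p u = ‖u‖_{p,h}^p`. -/
def normP (Δx Δy : ℝ) (J K : ℕ) (p : ℕ) (u : ℕ → ℕ → ℂ) : ℝ :=
  Δx * Δy * ∑ j ∈ range J, ∑ k ∈ range K, ‖u j k‖ ^ p

/-- `gradSq Δx Δy J K u = ‖δ⁺u‖²_{2,h}`. -/
def gradSq (Δx Δy : ℝ) (J K : ℕ) (u : ℕ → ℕ → ℂ) : ℝ :=
  Δx * Δy * ∑ j ∈ range J, ∑ k ∈ range K,
    (‖(u (j + 1) k - u j k) / (Δx : ℂ)‖ ^ 2 +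
      ‖(u j (k + 1) - u j k) / (Δy : ℂ)‖ ^ 2)

/-- The discrete energy `E_h(u)`. -/
def energy (Δx Δy : ℝ) (J K : ℕ) (lam ν : ℝ) (u : ℕ → ℕ → ℂ) : ℝ :=
  gradSq Δx Δy J K u - lam / 2 * normP Δx Δy J K 4 u + ν / 3 * normP Δx Δy J K 6 u

/-- The discrete Laplacian `δ² = δ²_x + δ²_y` (at interior indices). -/
def delta2 (Δx Δy : ℝ) (u : ℕ → ℕ → ℂ) (j k : ℕ) : ℂ :=
  (u (j + 1) k - 2 * u j k + u (j - 1) k) / (Δx : ℂ) ^ 2 +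
    (u j (k + 1) - 2 * u j k + u j (k - 1)) / (Δy : ℂ) ^ 2

/-- `ψ₁(z,w) = ((|z|² + |w|²)/2)·((z+w)/2)`. -/
def psi1 (z w : ℂ) : ℂ :=
  (((‖z‖ ^ 2 + ‖w‖ ^ 2) / 2 : ℝ) : ℂ) * ((z + w) / 2)

/-- `ψ₂(z,w) = ((|z|⁴ + |z|²|w|² + |w|⁴)/3)·((z+w)/2)`. -/
def psi2 (z w : ℂ) : ℂ :=
  (((‖z‖ ^ 4 + ‖z‖ ^ 2 * ‖w‖ ^ 2 + ‖w‖ ^ 4) / 3 : ℝ) : ℂ) *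
    ((z + w) / 2)

/-- `φ(z,w) = |(z+w)/2|²·((z+w)/2)`. -/
def phi (z w : ℂ) : ℂ :=
  ((‖(z + w) / 2‖ ^ 2 : ℝ) : ℂ) * ((z + w) / 2)

/-- One Crank–Nicolson step equation: `W` is the next level, `V` the current one. -/
def stepEq (Δx Δy : ℝ) (J K : ℕ) (lam ν ε τ : ℝ) (W V : ℕ → ℕ → ℂ) : Prop :=
  ∀ j k : ℕ, 1 ≤ j → j ≤ J - 1 → 1 ≤ k → k ≤ K - 1 →
    Complex.I * (W j k - V j k) / (τ : ℂ) +
      delta2 Δx Δy (fun j' k' => (W j' k' + V j' k') / 2) j k +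
      (lam : ℂ) * psi1 (W j k) (V j k) - (ν : ℂ) * psi2 (W j k) (V j k) +
      Complex.I * (ε : ℂ) * phi (W j k) (V j k) = 0

/-- A CNFD solution `U⁰, …, U^N`. -/
def isCNFD (Δx Δy : ℝ) (J K : ℕ) (lam ν ε τ : ℝ) (N : ℕ) (U : ℕ → ℕ → ℕ → ℂ) : Prop :=
  (∀ n, n ≤ N → memX J K (U n)) ∧
    ∀ n, n < N → stepEq Δx Δy J K lam ν ε τ (U (n + 1)) (U n)


lemma aux_pow_pair (x y : ℝ) (hx : 0 ≤ x) (hy : 0 ≤ y) (i j : ℕ) :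
    x ^ i * y ^ j + x ^ j * y ^ i ≤ x ^ (i + j) + y ^ (i + j) := by
  have h : 0 ≤ (x ^ i - y ^ i) * (x ^ j - y ^ j) := by
    rcases le_total x y with h | h
    · have hi := pow_le_pow_left₀ hx h i
      have hj := pow_le_pow_left₀ hx h j
      nlinarith
    · have hi := pow_le_pow_left₀ hy h i
      have hj := pow_le_pow_left₀ hy h j
      nlinarith
  rw [pow_add, pow_add]
  nlinarith [h]

lemma aux_pow_diff (x y : ℝ) (hx : 0 ≤ x) (hy : 0 ≤ y) (p : ℕ) :
    |x ^ p - y ^ p| ≤ p / 2 * (x ^ (p - 1) + y ^ (p - 1)) * |x - y| := by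
  have hrev : (∑ i ∈ range p, x ^ i * y ^ (p - 1 - i))
      = ∑ i ∈ range p, x ^ (p - 1 - i) * y ^ (p - 1 - (p - 1 - i)) :=
    (Finset.sum_range_reflect _ _).symm
  have key : ∑ i ∈ range p, x ^ i * y ^ (p - 1 - i)
      ≤ (p : ℝ) / 2 * (x ^ (p - 1) + y ^ (p - 1)) := by
    have h2 : 2 * ∑ i ∈ range p, x ^ i * y ^ (p - 1 - i)
        ≤ ∑ _i ∈ range p, (x ^ (p - 1) + y ^ (p - 1)) := by
      rw [two_mul]
      nth_rewrite 2 [hrev]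
      rw [← Finset.sum_add_distrib]
      apply Finset.sum_le_sum
      intro i hi
      simp only [Finset.mem_range] at hi
      have h3 : p - 1 - (p - 1 - i) = i := by omega
      rw [h3]
      have := aux_pow_pair x y hx hy i (p - 1 - i)
      have hij : i + (p - 1 - i) = p - 1 := by omega
      rw [hij] at this
      linarith [this]
    rw [Finset.sum_const, Finset.card_range, nsmul_eq_mul] at h2
    linarith
  calc |x ^ p - y ^ p|
      = |∑ i ∈ range p, x ^ i * y ^ (p - 1 - i)| * |x - y| := by
        rw [← abs_mul, geom_sum₂_mul]
    _ ≤ (↑p / 2 * (x ^ (p - 1) + y ^ (p - 1))) * |x - y| := by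
        apply mul_le_mul_of_nonneg_right _ (abs_nonneg _)
        rw [_root_.abs_of_nonneg (Finset.sum_nonneg fun i _ => by positivity)]
        exact key

lemma aux_tel (g : ℕ → ℝ) (n : ℕ) (h0 : g 0 = 0) (hn : g n = 0) (j : ℕ) (hj : j ≤ n) :
    2 * g j ≤ ∑ i ∈ range n, |g (i + 1) - g i| := by
  have h1 : ∑ i ∈ range j, (g (i + 1) - g i) = g j := by
    rw [Finset.sum_range_sub, h0, sub_zero]
  have h2 : ∑ i ∈ Ico j n, (g (i + 1) - g i) = -g j := by
    have h5 := Finset.sum_range_add_sum_Ico (fun i => g (i + 1) - g i) hj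
    rw [Finset.sum_range_sub, Finset.sum_range_sub, h0, hn] at h5
    linarith
  have h3 : ∑ i ∈ range j, (g (i + 1) - g i) ≤ ∑ i ∈ range j, |g (i + 1) - g i| :=
    Finset.sum_le_sum fun i _ => le_abs_self _
  have h4 : -∑ i ∈ Ico j n, (g (i + 1) - g i) ≤ ∑ i ∈ Ico j n, |g (i + 1) - g i| := by
    rw [← Finset.sum_neg_distrib]
    exact Finset.sum_le_sum fun i _ => neg_le_abs _
  have h5 := Finset.sum_range_add_sum_Ico (fun i => |g (i + 1) - g i|) hj
  linarith

lemma aux_shift (f : ℕ → ℝ) (n : ℕ) (h : f n = f 0) :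
    ∑ i ∈ range n, f (i + 1) = ∑ i ∈ range n, f i := by
  have h1 := Finset.sum_range_succ f n
  have h2 := Finset.sum_range_succ' f n
  linarith

lemma aux_chain (J K p : ℕ) (u : ℕ → ℕ → ℂ)
    (h0 : ∀ k, u 0 k = 0) (hJ : ∀ k, u J k = 0) :
    ∑ j ∈ range J, ∑ k ∈ range K,
        |‖u (j + 1) k‖ ^ p - ‖u j k‖ ^ p|
      ≤ p * Real.sqrt (∑ j ∈ range J, ∑ k ∈ range K, ‖u j k‖ ^ (2 * (p - 1)))
          * Real.sqrt (∑ j ∈ range J, ∑ k ∈ range K,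
              ‖u (j + 1) k - u j k‖ ^ 2) := by
  set s : Finset (ℕ × ℕ) := range J ×ˢ range K with hs
  set f : ℕ × ℕ → ℝ := fun q =>
    ‖u (q.1 + 1) q.2‖ ^ (p - 1) + ‖u q.1 q.2‖ ^ (p - 1) with hf
  set g : ℕ × ℕ → ℝ := fun q => ‖u (q.1 + 1) q.2 - u q.1 q.2‖ with hg
  set Sq : ℝ := ∑ j ∈ range J, ∑ k ∈ range K, ‖u j k‖ ^ (2 * (p - 1)) with hSq
  set Dx : ℝ := ∑ j ∈ range J, ∑ k ∈ range K, ‖u (j + 1) k - u j k‖ ^ 2 with hDx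
  have hSqnn : 0 ≤ Sq := Finset.sum_nonneg fun j _ =>
    Finset.sum_nonneg fun k _ => by positivity
  have hDxnn : 0 ≤ Dx := Finset.sum_nonneg fun j _ =>
    Finset.sum_nonneg fun k _ => by positivity
  -- step 1 : pointwise bound
  have step1 : ∑ j ∈ range J, ∑ k ∈ range K,
      |‖u (j + 1) k‖ ^ p - ‖u j k‖ ^ p|
      ≤ (p : ℝ) / 2 * ∑ q ∈ s, f q * g q := by
    rw [hs, Finset.sum_product, Finset.mul_sum]
    apply Finset.sum_le_sum
    intro j _
    rw [Finset.mul_sum]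
    apply Finset.sum_le_sum
    intro k _
    have h1 := aux_pow_diff (‖u (j + 1) k‖) (‖u j k‖)
      (norm_nonneg _) (norm_nonneg _) p
    have h2 : |‖u (j + 1) k‖ - ‖u j k‖|
        ≤ ‖u (j + 1) k - u j k‖ :=
      abs_norm_sub_norm_le _ _
    have h3 : (0:ℝ) ≤ (p : ℝ) / 2 *
        (‖u (j + 1) k‖ ^ (p - 1) + ‖u j k‖ ^ (p - 1)) := by positivity
    calc |‖u (j + 1) k‖ ^ p - ‖u j k‖ ^ p|
        ≤ (p : ℝ) / 2 *
            (‖u (j + 1) k‖ ^ (p - 1) + ‖u j k‖ ^ (p - 1)) *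
            |‖u (j + 1) k‖ - ‖u j k‖| := h1
      _ ≤ (p : ℝ) / 2 *
            (‖u (j + 1) k‖ ^ (p - 1) + ‖u j k‖ ^ (p - 1)) *
            ‖u (j + 1) k - u j k‖ := mul_le_mul_of_nonneg_left h2 h3
      _ = (p : ℝ) / 2 * (f (j, k) * g (j, k)) := by rw [hf, hg]; ring
  -- step 2 : Cauchy-Schwarz
  have hfgnn : 0 ≤ ∑ q ∈ s, f q * g q :=
    Finset.sum_nonneg fun q _ => mul_nonneg (by positivity) (by positivity)
  have step2 : ∑ q ∈ s, f q * g q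
      ≤ Real.sqrt (∑ q ∈ s, f q ^ 2) * Real.sqrt (∑ q ∈ s, g q ^ 2) := by
    have hcs := Finset.sum_mul_sq_le_sq_mul_sq s f g
    have h := Real.sqrt_le_sqrt hcs
    rw [Real.sqrt_sq hfgnn, Real.sqrt_mul (Finset.sum_nonneg fun q _ => sq_nonneg _)] at h
    exact h
  -- step 3 : bound on ∑ f²
  have step3 : ∑ q ∈ s, f q ^ 2 ≤ 4 * Sq := by
    have hb : ∀ q ∈ s, f q ^ 2 ≤
        2 * ‖u (q.1 + 1) q.2‖ ^ (2 * (p - 1)) +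
        2 * ‖u q.1 q.2‖ ^ (2 * (p - 1)) := by
      intro q _
      have e1 : ‖u (q.1 + 1) q.2‖ ^ (2 * (p - 1))
          = (‖u (q.1 + 1) q.2‖ ^ (p - 1)) ^ 2 := by
        rw [← pow_mul, mul_comm]
      have e2 : ‖u q.1 q.2‖ ^ (2 * (p - 1))
          = (‖u q.1 q.2‖ ^ (p - 1)) ^ 2 := by
        rw [← pow_mul, mul_comm]
      rw [hf, e1, e2]
      dsimp only
      nlinarith [sq_nonneg (‖u (q.1 + 1) q.2‖ ^ (p - 1) -
        ‖u q.1 q.2‖ ^ (p - 1))]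
    calc ∑ q ∈ s, f q ^ 2
        ≤ ∑ q ∈ s, (2 * ‖u (q.1 + 1) q.2‖ ^ (2 * (p - 1)) +
            2 * ‖u q.1 q.2‖ ^ (2 * (p - 1))) := Finset.sum_le_sum hb
      _ = 2 * (∑ j ∈ range J, ∑ k ∈ range K,
            ‖u (j + 1) k‖ ^ (2 * (p - 1))) + 2 * Sq := by
          rw [hs, Finset.sum_product, hSq]
          simp only [Finset.sum_add_distrib, Finset.mul_sum]
      _ = 4 * Sq := by
          have hshift : ∀ k ∈ range K, ∑ j ∈ range J,
              ‖u (j + 1) k‖ ^ (2 * (p - 1)) =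
              ∑ j ∈ range J, ‖u j k‖ ^ (2 * (p - 1)) := by
            intro k _
            apply aux_shift (fun j => ‖u j k‖ ^ (2 * (p - 1)))
            simp only [h0 k, hJ k]
          rw [Finset.sum_comm, hSq]
          rw [Finset.sum_congr rfl hshift, Finset.sum_comm]
          ring
  -- combine
  have hsq2 : Real.sqrt (∑ q ∈ s, f q ^ 2) ≤ 2 * Real.sqrt Sq := by
    have h := Real.sqrt_le_sqrt step3
    rwa [show (4:ℝ) * Sq = 2 ^ 2 * Sq by ring,
      Real.sqrt_mul (by norm_num : (0:ℝ) ≤ 2 ^ 2),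
      Real.sqrt_sq (by norm_num : (0:ℝ) ≤ 2)] at h
  have hgD : (∑ q ∈ s, g q ^ 2) = Dx := by
    rw [hs, Finset.sum_product, hDx, hg]
  calc ∑ j ∈ range J, ∑ k ∈ range K,
      |‖u (j + 1) k‖ ^ p - ‖u j k‖ ^ p|
      ≤ (p : ℝ) / 2 * ∑ q ∈ s, f q * g q := step1
    _ ≤ (p : ℝ) / 2 * (Real.sqrt (∑ q ∈ s, f q ^ 2) * Real.sqrt (∑ q ∈ s, g q ^ 2)) :=
        mul_le_mul_of_nonneg_left step2 (by positivity)
    _ ≤ (p : ℝ) / 2 * ((2 * Real.sqrt Sq) * Real.sqrt Dx) := by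
        rw [hgD]
        apply mul_le_mul_of_nonneg_left _ (by positivity)
        exact mul_le_mul_of_nonneg_right hsq2 (Real.sqrt_nonneg _)
    _ = p * Real.sqrt Sq * Real.sqrt Dx := by ring

set_option maxHeartbeats 1000000 in
/-- For `u ∈ X_JK` and positive integer `p`,
`‖u‖_{2p,h}^{2p} ≤ (p²/8)·‖u‖_{2(p−1),h}^{2(p−1)}·‖δ⁺u‖²_{2,h}`. -/
theorem stmt0 (J K : ℕ) (hJ : 2 ≤ J) (hK : 2 ≤ K) (a b c d : ℝ) (hab : a < b) (hcd : c < d)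
    (Δx Δy : ℝ) (hΔx : Δx = (b - a) / J) (hΔy : Δy = (d - c) / K)
    (u : ℕ → ℕ → ℂ) (hu : memX J K u) (p : ℕ) (hp : 0 < p) :
    normP Δx Δy J K (2 * p) u ≤
      (p : ℝ) ^ 2 / 8 * normP Δx Δy J K (2 * (p - 1)) u * gradSq Δx Δy J K u := by
  obtain ⟨hb0, hbJ, hc0, hcK⟩ := hu
  have hJpos : (0:ℝ) < J := by positivity
  have hKpos : (0:ℝ) < K := by positivity
  have hΔxpos : 0 < Δx := by rw [hΔx]; exact div_pos (by linarith) hJpos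
  have hΔypos : 0 < Δy := by rw [hΔy]; exact div_pos (by linarith) hKpos
  set Sq : ℝ := ∑ j ∈ range J, ∑ k ∈ range K, ‖u j k‖ ^ (2 * (p - 1)) with hSq
  set Dx : ℝ := ∑ j ∈ range J, ∑ k ∈ range K, ‖u (j + 1) k - u j k‖ ^ 2 with hDx
  set Dy : ℝ := ∑ j ∈ range J, ∑ k ∈ range K, ‖u j (k + 1) - u j k‖ ^ 2 with hDy
  set Ax : ℕ → ℝ := fun k => ∑ j ∈ range J,
    |‖u (j + 1) k‖ ^ p - ‖u j k‖ ^ p| with hAx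
  set By : ℕ → ℝ := fun j => ∑ k ∈ range K,
    |‖u j (k + 1)‖ ^ p - ‖u j k‖ ^ p| with hBy
  have hSqnn : 0 ≤ Sq := Finset.sum_nonneg fun j _ => Finset.sum_nonneg fun k _ => by positivity
  have hDxnn : 0 ≤ Dx := Finset.sum_nonneg fun j _ => Finset.sum_nonneg fun k _ => by positivity
  have hDynn : 0 ≤ Dy := Finset.sum_nonneg fun j _ => Finset.sum_nonneg fun k _ => by positivity
  have hAxnn : ∀ k, 0 ≤ Ax k := fun k => Finset.sum_nonneg fun j _ => abs_nonneg _
  have hBynn : ∀ j, 0 ≤ By j := fun j => Finset.sum_nonneg fun k _ => abs_nonneg _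
  -- pointwise bounds from telescoping
  have hFx : ∀ j ∈ range J, ∀ k, ‖u j k‖ ^ p ≤ Ax k / 2 := by
    intro j hj k
    rw [Finset.mem_range] at hj
    have h := aux_tel (fun j' => ‖u j' k‖ ^ p) J
      (by simp [hb0 k, zero_pow hp.ne'])
      (by simp [hbJ k, zero_pow hp.ne']) j hj.le
    rw [hAx]
    dsimp only at h ⊢
    linarith
  have hFy : ∀ j, ∀ k ∈ range K, ‖u j k‖ ^ p ≤ By j / 2 := by
    intro j k hk
    rw [Finset.mem_range] at hk
    have h := aux_tel (fun k' => ‖u j k'‖ ^ p) K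
      (by simp [hc0 j, zero_pow hp.ne'])
      (by simp [hcK j, zero_pow hp.ne']) k hk.le
    rw [hBy]
    dsimp only at h ⊢
    linarith
  -- the double sum of F^2
  have hS2 : ∑ j ∈ range J, ∑ k ∈ range K, (‖u j k‖ ^ p) ^ 2
      ≤ (∑ k ∈ range K, Ax k) * (∑ j ∈ range J, By j) / 4 := by
    calc ∑ j ∈ range J, ∑ k ∈ range K, (‖u j k‖ ^ p) ^ 2
        ≤ ∑ j ∈ range J, ∑ k ∈ range K, By j / 2 * (Ax k / 2) := by
          apply Finset.sum_le_sum; intro j hj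
          apply Finset.sum_le_sum; intro k hk
          have h1 := hFx j hj k
          have h2 := hFy j k hk
          have h3 : (0:ℝ) ≤ ‖u j k‖ ^ p := by positivity
          calc (‖u j k‖ ^ p) ^ 2
              = ‖u j k‖ ^ p * ‖u j k‖ ^ p := by ring
            _ ≤ By j / 2 * (Ax k / 2) := mul_le_mul h2 h1 h3 (by linarith [hBynn j])
      _ = (∑ k ∈ range K, Ax k) * (∑ j ∈ range J, By j) / 4 := by
          rw [← Finset.sum_mul_sum]
          rw [← Finset.sum_div, ← Finset.sum_div]
          ring
  -- chain bounds
  have chainX : ∑ k ∈ range K, Ax k ≤ p * Real.sqrt Sq * Real.sqrt Dx := by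
    have h := aux_chain J K p u hb0 hbJ
    rw [← hSq, ← hDx] at h
    have e : ∑ k ∈ range K, Ax k = ∑ j ∈ range J, ∑ k ∈ range K,
        |‖u (j + 1) k‖ ^ p - ‖u j k‖ ^ p| := by
      rw [hAx]; exact Finset.sum_comm
    rw [e]; exact h
  have chainY : ∑ j ∈ range J, By j ≤ p * Real.sqrt Sq * Real.sqrt Dy := by
    have h := aux_chain K J p (fun k j => u j k) (fun j => hc0 j) (fun j => hcK j)
    have eS : ∑ k ∈ range K, ∑ j ∈ range J, ‖u j k‖ ^ (2 * (p - 1)) = Sq := by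
      rw [hSq]; exact Finset.sum_comm
    have eD : ∑ k ∈ range K, ∑ j ∈ range J, ‖u j (k + 1) - u j k‖ ^ 2 = Dy := by
      rw [hDy]; exact Finset.sum_comm
    have eB : ∑ j ∈ range J, By j = ∑ k ∈ range K, ∑ j ∈ range J,
        |‖u j (k + 1)‖ ^ p - ‖u j k‖ ^ p| := by
      rw [hBy]; exact Finset.sum_comm
    rw [eS, eD] at h
    rw [eB]; exact h
  -- sqrt manipulations
  set A : ℝ := Dx / Δx ^ 2 with hA
  set B : ℝ := Dy / Δy ^ 2 with hB
  have hAnn : 0 ≤ A := by positivity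
  have hBnn : 0 ≤ B := by positivity
  have hsx : Real.sqrt Dx = Δx * Real.sqrt A := by
    rw [hA, ← Real.sqrt_sq hΔxpos.le, ← Real.sqrt_mul (sq_nonneg _), Real.sqrt_sq hΔxpos.le]
    congr 1
    field_simp
  have hsy : Real.sqrt Dy = Δy * Real.sqrt B := by
    rw [hB, ← Real.sqrt_sq hΔypos.le, ← Real.sqrt_mul (sq_nonneg _), Real.sqrt_sq hΔypos.le]
    congr 1
    field_simp
  have hAB : Real.sqrt Dx * Real.sqrt Dy ≤ Δx * Δy * ((A + B) / 2) := by
    rw [hsx, hsy]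
    have h1 : Real.sqrt A * Real.sqrt B ≤ (A + B) / 2 := by
      nlinarith [Real.sq_sqrt hAnn, Real.sq_sqrt hBnn, sq_nonneg (Real.sqrt A - Real.sqrt B),
        Real.sqrt_nonneg A, Real.sqrt_nonneg B]
    calc Δx * Real.sqrt A * (Δy * Real.sqrt B) = Δx * Δy * (Real.sqrt A * Real.sqrt B) := by ring
      _ ≤ Δx * Δy * ((A + B) / 2) := mul_le_mul_of_nonneg_left h1 (by positivity)
  -- core estimate
  have key : ∑ j ∈ range J, ∑ k ∈ range K, (‖u j k‖ ^ p) ^ 2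
      ≤ (p:ℝ) ^ 2 / 8 * Sq * (Δx * Δy * (A + B)) := by
    have h1 : (∑ k ∈ range K, Ax k) * (∑ j ∈ range J, By j)
        ≤ (p * Real.sqrt Sq * Real.sqrt Dx) * (p * Real.sqrt Sq * Real.sqrt Dy) :=
      mul_le_mul chainX chainY (Finset.sum_nonneg fun j _ => hBynn j) (by positivity)
    have hss : Real.sqrt Sq * Real.sqrt Sq = Sq := Real.mul_self_sqrt hSqnn
    have h2 : (p * Real.sqrt Sq * Real.sqrt Dx) * (p * Real.sqrt Sq * Real.sqrt Dy)
        = (p:ℝ) ^ 2 * Sq * (Real.sqrt Dx * Real.sqrt Dy) := by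
      linear_combination ((p:ℝ) ^ 2 * Real.sqrt Dx * Real.sqrt Dy) * hss
    have h3 : (p:ℝ) ^ 2 * Sq * (Real.sqrt Dx * Real.sqrt Dy)
        ≤ (p:ℝ) ^ 2 * Sq * (Δx * Δy * ((A + B) / 2)) :=
      mul_le_mul_of_nonneg_left hAB (by positivity)
    calc ∑ j ∈ range J, ∑ k ∈ range K, (‖u j k‖ ^ p) ^ 2
        ≤ (∑ k ∈ range K, Ax k) * (∑ j ∈ range J, By j) / 4 := hS2
      _ ≤ (p:ℝ) ^ 2 * Sq * (Δx * Δy * ((A + B) / 2)) / 4 := by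
          rw [← h2] at h3
          linarith [h1, h3]
      _ = (p:ℝ) ^ 2 / 8 * Sq * (Δx * Δy * (A + B)) := by ring
  -- identify gradSq
  have hgrad : gradSq Δx Δy J K u = Δx * Δy * (A + B) := by
    unfold gradSq
    congr 1
    have hterm : ∀ j k : ℕ,
        ‖(u (j + 1) k - u j k) / (Δx : ℂ)‖ ^ 2 +
          ‖(u j (k + 1) - u j k) / (Δy : ℂ)‖ ^ 2
        = ‖u (j + 1) k - u j k‖ ^ 2 / Δx ^ 2 +
          ‖u j (k + 1) - u j k‖ ^ 2 / Δy ^ 2 := by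
      intro j k
      rw [norm_div, norm_div, Complex.norm_real, Complex.norm_real, Real.norm_eq_abs, Real.norm_eq_abs,
        abs_of_pos hΔxpos, abs_of_pos hΔypos, div_pow, div_pow]
    calc ∑ j ∈ range J, ∑ k ∈ range K,
          (‖(u (j + 1) k - u j k) / (Δx : ℂ)‖ ^ 2 +
            ‖(u j (k + 1) - u j k) / (Δy : ℂ)‖ ^ 2)
        = ∑ j ∈ range J, ∑ k ∈ range K,
            (‖u (j + 1) k - u j k‖ ^ 2 / Δx ^ 2 +
              ‖u j (k + 1) - u j k‖ ^ 2 / Δy ^ 2) :=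
          Finset.sum_congr rfl fun j _ => Finset.sum_congr rfl fun k _ => hterm j k
      _ = A + B := by
          rw [hA, hB, hDx, hDy]
          simp only [Finset.sum_add_distrib, ← Finset.sum_div]
  -- identify normP at 2*p
  have hnorm2p : normP Δx Δy J K (2 * p) u
      = Δx * Δy * ∑ j ∈ range J, ∑ k ∈ range K, (‖u j k‖ ^ p) ^ 2 := by
    unfold normP
    congr 1
    exact Finset.sum_congr rfl fun j _ => Finset.sum_congr rfl fun k _ => by
      rw [← pow_mul, mul_comm]
  have hnormq : normP Δx Δy J K (2 * (p - 1)) u = Δx * Δy * Sq := by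
    unfold normP
    rw [hSq]
  rw [hnorm2p, hnormq, hgrad]
  calc Δx * Δy * ∑ j ∈ range J, ∑ k ∈ range K, (‖u j k‖ ^ p) ^ 2
      ≤ Δx * Δy * ((p:ℝ) ^ 2 / 8 * Sq * (Δx * Δy * (A + B))) :=
        mul_le_mul_of_nonneg_left key (by positivity)
    _ = (p:ℝ) ^ 2 / 8 * (Δx * Δy * Sq) * (Δx * Δy * (A + B)) := by ring
end
end

section
/- For every u ∈ X_JK one has the discrete Gagliardo–Nirenberg-type inequality ‖u‖⁴_{4,h} ≤ (1/2) · ‖u‖²_{2,h} · ‖δ⁺u‖²_{2,h}. -/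
noncomputable section

open Finset Complex ComplexConjugate

private lemma telescope_bound (w : ℕ → ℝ) (J : ℕ) (h0 : w 0 = 0) (hJ : w J = 0)
    (j : ℕ) (hj : j < J) : 2 * w j ≤ ∑ i ∈ range J, |w (i+1) - w i| := by
  have h1 : w j = ∑ i ∈ range j, (w (i+1) - w i) := by
    rw [Finset.sum_range_sub, h0, sub_zero]
  have h2 : - w j = ∑ i ∈ Finset.Ico j J, (w (i+1) - w i) := by
    rw [Finset.sum_Ico_eq_sub _ hj.le, Finset.sum_range_sub, Finset.sum_range_sub, hJ]
    ring
  have hsplit : ∑ i ∈ range J, |w (i+1) - w i| =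
      ∑ i ∈ range j, |w (i+1) - w i| + ∑ i ∈ Finset.Ico j J, |w (i+1) - w i| := by
    rw [Finset.range_eq_Ico, Finset.range_eq_Ico]
    exact (Finset.sum_Ico_consecutive (fun i => |w (i+1) - w i|) (Nat.zero_le j) hj.le).symm
  have b1 : w j ≤ ∑ i ∈ range j, |w (i+1) - w i| := by
    rw [h1]; exact Finset.sum_le_sum fun i _ => le_abs_self _
  have b2 : w j ≤ ∑ i ∈ Finset.Ico j J, |w (i+1) - w i| := by
    have h3 : w j = ∑ i ∈ Finset.Ico j J, -(w (i+1) - w i) := by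
      rw [Finset.sum_neg_distrib, ← h2, neg_neg]
    rw [h3]; exact Finset.sum_le_sum fun i _ => neg_le_abs _
  linarith

private lemma diff_bound (z w : ℂ) :
    |‖z‖ ^ 2 - ‖w‖ ^ 2| ≤
      (‖z‖ + ‖w‖) * ‖z - w‖ := by
  have h : |‖z‖ - ‖w‖| ≤ ‖z - w‖ :=
    abs_norm_sub_norm_le z w
  have h2 : |‖z‖ ^ 2 - ‖w‖ ^ 2| =
      (‖z‖ + ‖w‖) * |‖z‖ - ‖w‖| := by
    rw [← _root_.abs_of_nonneg (by positivity : (0:ℝ) ≤ ‖z‖ + ‖w‖),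
      ← abs_mul]
    ring_nf
  rw [h2]
  exact mul_le_mul_of_nonneg_left h (by positivity)

private lemma shift_sum (f : ℕ → ℝ) (J : ℕ) (h0 : f 0 = 0) (hJ : f J = 0) :
    ∑ j ∈ range J, f (j+1) = ∑ j ∈ range J, f j := by
  have h1 := Finset.sum_range_succ' f J
  have h2 := Finset.sum_range_succ f J
  rw [h2, hJ, add_zero, h0, add_zero] at h1
  exact h1.symm

private lemma gn_sq (P S Dx Dy Tx Ty : ℝ) (hkey : 4 * P ≤ Tx * Ty) (hP : 0 ≤ P)
    (hTx2 : Tx ^ 2 ≤ 4 * S * Dx) (hTy2 : Ty ^ 2 ≤ 4 * S * Dy)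
    (hS : 0 ≤ S) (hDx : 0 ≤ Dx) (hDy : 0 ≤ Dy) (hTy : 0 ≤ Ty) :
    P ^ 2 ≤ S ^ 2 * (Dx * Dy) := by
  have h1 : (4 * P) ^ 2 ≤ (Tx * Ty) ^ 2 :=
    pow_le_pow_left₀ (by linarith) hkey 2
  have h3 : Tx ^ 2 * Ty ^ 2 ≤ (4 * S * Dx) * (4 * S * Dy) :=
    mul_le_mul hTx2 hTy2 (sq_nonneg _) (by positivity)
  nlinarith [h1, h3]

private lemma gn_amgm (P S X Y : ℝ) (hP : 0 ≤ P) (hS : 0 ≤ S) (hX : 0 ≤ X) (hY : 0 ≤ Y)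
    (h : P ^ 2 ≤ S ^ 2 * (X * Y)) : 2 * P ≤ S * (X + Y) := by
  nlinarith [sq_nonneg (S * X - S * Y), mul_nonneg hS (add_nonneg hX hY)]

private lemma gn_final (q P S X Y : ℝ) (hq : 0 ≤ q) (h : 2 * P ≤ S * (X + Y)) :
    q * P ≤ 1 / 2 * (q * S) * (X + Y) := by
  nlinarith [mul_le_mul_of_nonneg_left h hq]

set_option maxHeartbeats 1000000 in
/-- For `u ∈ X_JK`, `‖u‖⁴_{4,h} ≤ (1/2)·‖u‖²_{2,h}·‖δ⁺u‖²_{2,h}`. -/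
theorem stmt1 (J K : ℕ) (hJ : 2 ≤ J) (hK : 2 ≤ K) (a b c d : ℝ) (hab : a < b) (hcd : c < d)
    (Δx Δy : ℝ) (hΔx : Δx = (b - a) / J) (hΔy : Δy = (d - c) / K)
    (u : ℕ → ℕ → ℂ) (hu : memX J K u) :
    normP Δx Δy J K 4 u ≤ 1 / 2 * normP Δx Δy J K 2 u * gradSq Δx Δy J K u := by
  obtain ⟨hu0, huJ, hv0, hvK⟩ := hu
  have hΔx' : 0 < Δx := by
    rw [hΔx]; apply div_pos (by linarith)
    exact_mod_cast Nat.lt_of_lt_of_le (by norm_num) hJ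
  have hΔy' : 0 < Δy := by
    rw [hΔy]; apply div_pos (by linarith)
    exact_mod_cast Nat.lt_of_lt_of_le (by norm_num) hK
  -- basic quantities
  set S : ℝ := ∑ j ∈ range J, ∑ k ∈ range K, ‖u j k‖ ^ 2 with hS
  set P : ℝ := ∑ j ∈ range J, ∑ k ∈ range K, ‖u j k‖ ^ 4 with hP
  set Dx : ℝ := ∑ j ∈ range J, ∑ k ∈ range K, ‖u (j+1) k - u j k‖ ^ 2 with hDx
  set Dy : ℝ := ∑ j ∈ range J, ∑ k ∈ range K, ‖u j (k+1) - u j k‖ ^ 2 with hDy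
  have hSnn : 0 ≤ S := by positivity
  have hPnn : 0 ≤ P := by positivity
  have hDxnn : 0 ≤ Dx := by positivity
  have hDynn : 0 ≤ Dy := by positivity
  set Ax : ℕ → ℝ := fun k => ∑ j ∈ range J,
    (‖u (j+1) k‖ + ‖u j k‖) * ‖u (j+1) k - u j k‖
    with hAx
  set By : ℕ → ℝ := fun j => ∑ k ∈ range K,
    (‖u j (k+1)‖ + ‖u j k‖) * ‖u j (k+1) - u j k‖
    with hBy
  have hAxnn : ∀ k, 0 ≤ Ax k := fun k => Finset.sum_nonneg fun j _ => by positivity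
  have hBynn : ∀ j, 0 ≤ By j := fun j => Finset.sum_nonneg fun k _ => by positivity
  set Tx : ℝ := ∑ k ∈ range K, Ax k with hTx
  set Ty : ℝ := ∑ j ∈ range J, By j with hTy
  have hTxnn : 0 ≤ Tx := Finset.sum_nonneg fun k _ => hAxnn k
  have hTynn : 0 ≤ Ty := Finset.sum_nonneg fun j _ => hBynn j
  -- Step 1: 2 |u j k|^2 ≤ Ax k for j < J
  have hA : ∀ j ∈ range J, ∀ k, 2 * ‖u j k‖ ^ 2 ≤ Ax k := by
    intro j hjmem k
    have hjlt := Finset.mem_range.mp hjmem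
    have tb := telescope_bound (fun j' => ‖u j' k‖ ^ 2) J
      (by simp [hu0 k]) (by simp [huJ k]) j hjlt
    refine tb.trans (Finset.sum_le_sum fun i _ => ?_)
    exact diff_bound (u (i+1) k) (u i k)
  -- Step 2: 2 |u j k|^2 ≤ By j for k < K
  have hB : ∀ k ∈ range K, ∀ j, 2 * ‖u j k‖ ^ 2 ≤ By j := by
    intro k hkmem j
    have hklt := Finset.mem_range.mp hkmem
    have tb := telescope_bound (fun k' => ‖u j k'‖ ^ 2) K
      (by simp [hv0 j]) (by simp [hvK j]) k hklt
    refine tb.trans (Finset.sum_le_sum fun i _ => ?_)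
    exact diff_bound (u j (i+1)) (u j i)
  -- Step 3: 4 P ≤ Tx * Ty
  have hkey : 4 * P ≤ Tx * Ty := by
    have h1 : 4 * P = ∑ j ∈ range J, ∑ k ∈ range K,
        (2 * ‖u j k‖ ^ 2) * (2 * ‖u j k‖ ^ 2) := by
      rw [hP, Finset.mul_sum]
      refine Finset.sum_congr rfl fun j _ => ?_
      rw [Finset.mul_sum]
      exact Finset.sum_congr rfl fun k _ => by ring
    have h2 : ∑ j ∈ range J, ∑ k ∈ range K,
        (2 * ‖u j k‖ ^ 2) * (2 * ‖u j k‖ ^ 2)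
        ≤ ∑ j ∈ range J, ∑ k ∈ range K, Ax k * By j := by
      refine Finset.sum_le_sum fun j hj => Finset.sum_le_sum fun k hk => ?_
      exact mul_le_mul (hA j hj k) (hB k hk j) (by positivity) (hAxnn k)
    have h3 : ∑ j ∈ range J, ∑ k ∈ range K, Ax k * By j = Tx * Ty := by
      rw [hTy, Finset.mul_sum]
      refine Finset.sum_congr rfl fun j _ => ?_
      rw [mul_comm Tx (By j), hTx, Finset.mul_sum]
      exact Finset.sum_congr rfl fun k _ => mul_comm _ _
    rw [h1, ← h3]; exact h2
  -- Step 4: Cauchy-Schwarz in x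
  have hTx2 : Tx ^ 2 ≤ 4 * S * Dx := by
    have hcs := Finset.sum_mul_sq_le_sq_mul_sq (range K ×ˢ range J)
      (fun p => ‖u (p.2+1) p.1‖ + ‖u p.2 p.1‖)
      (fun p => ‖u (p.2+1) p.1 - u p.2 p.1‖)
    have e1 : Tx = ∑ p ∈ range K ×ˢ range J,
        (‖u (p.2+1) p.1‖ + ‖u p.2 p.1‖) *
          ‖u (p.2+1) p.1 - u p.2 p.1‖ := by
      rw [Finset.sum_product]
    have e2 : ∑ p ∈ range K ×ˢ range J,
        ‖u (p.2+1) p.1 - u p.2 p.1‖ ^ 2 = Dx := by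
      rw [Finset.sum_product, hDx]
      exact Finset.sum_comm
    have e3 : ∑ p ∈ range K ×ˢ range J,
        (‖u (p.2+1) p.1‖ + ‖u p.2 p.1‖) ^ 2 ≤ 4 * S := by
      have step1 : ∑ p ∈ range K ×ˢ range J,
          (‖u (p.2+1) p.1‖ + ‖u p.2 p.1‖) ^ 2
          ≤ ∑ p ∈ range K ×ˢ range J,
            (2 * ‖u (p.2+1) p.1‖ ^ 2 + 2 * ‖u p.2 p.1‖ ^ 2) := by
        refine Finset.sum_le_sum fun p _ => ?_
        nlinarith [sq_nonneg (‖u (p.2+1) p.1‖ - ‖u p.2 p.1‖)]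
      have step2 : ∑ p ∈ range K ×ˢ range J,
          (2 * ‖u (p.2+1) p.1‖ ^ 2 + 2 * ‖u p.2 p.1‖ ^ 2) = 4 * S := by
        rw [Finset.sum_product]
        have inner : ∀ k, ∑ j ∈ range J,
            (2 * ‖u (j+1) k‖ ^ 2 + 2 * ‖u j k‖ ^ 2)
            = ∑ j ∈ range J, 4 * ‖u j k‖ ^ 2 := by
          intro k
          rw [Finset.sum_add_distrib, ← Finset.mul_sum, ← Finset.mul_sum,
            shift_sum (fun j => ‖u j k‖ ^ 2) J (by simp [hu0 k]) (by simp [huJ k])]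
          rw [← Finset.mul_sum]
          ring
        rw [Finset.sum_congr rfl fun k _ => inner k]
        rw [hS, Finset.mul_sum, Finset.sum_comm]
        exact Finset.sum_congr rfl fun k _ => (Finset.mul_sum _ _ _).symm
      linarith
    calc Tx ^ 2 ≤ (∑ p ∈ range K ×ˢ range J,
          (‖u (p.2+1) p.1‖ + ‖u p.2 p.1‖) ^ 2) *
          ∑ p ∈ range K ×ˢ range J, ‖u (p.2+1) p.1 - u p.2 p.1‖ ^ 2 := by
            rw [e1]; exact hcs
      _ ≤ 4 * S * Dx := by
            rw [e2]; exact mul_le_mul_of_nonneg_right e3 hDxnn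
  -- Step 5: Cauchy-Schwarz in y
  have hTy2 : Ty ^ 2 ≤ 4 * S * Dy := by
    have hcs := Finset.sum_mul_sq_le_sq_mul_sq (range J ×ˢ range K)
      (fun p => ‖u p.1 (p.2+1)‖ + ‖u p.1 p.2‖)
      (fun p => ‖u p.1 (p.2+1) - u p.1 p.2‖)
    have e1 : Ty = ∑ p ∈ range J ×ˢ range K,
        (‖u p.1 (p.2+1)‖ + ‖u p.1 p.2‖) *
          ‖u p.1 (p.2+1) - u p.1 p.2‖ := by
      rw [Finset.sum_product]
    have e2 : ∑ p ∈ range J ×ˢ range K,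
        ‖u p.1 (p.2+1) - u p.1 p.2‖ ^ 2 = Dy := by
      rw [Finset.sum_product, hDy]
    have e3 : ∑ p ∈ range J ×ˢ range K,
        (‖u p.1 (p.2+1)‖ + ‖u p.1 p.2‖) ^ 2 ≤ 4 * S := by
      have step1 : ∑ p ∈ range J ×ˢ range K,
          (‖u p.1 (p.2+1)‖ + ‖u p.1 p.2‖) ^ 2
          ≤ ∑ p ∈ range J ×ˢ range K,
            (2 * ‖u p.1 (p.2+1)‖ ^ 2 + 2 * ‖u p.1 p.2‖ ^ 2) := by
        refine Finset.sum_le_sum fun p _ => ?_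
        nlinarith [sq_nonneg (‖u p.1 (p.2+1)‖ - ‖u p.1 p.2‖)]
      have step2 : ∑ p ∈ range J ×ˢ range K,
          (2 * ‖u p.1 (p.2+1)‖ ^ 2 + 2 * ‖u p.1 p.2‖ ^ 2) = 4 * S := by
        rw [Finset.sum_product]
        have inner : ∀ j, ∑ k ∈ range K,
            (2 * ‖u j (k+1)‖ ^ 2 + 2 * ‖u j k‖ ^ 2)
            = ∑ k ∈ range K, 4 * ‖u j k‖ ^ 2 := by
          intro j
          rw [Finset.sum_add_distrib, ← Finset.mul_sum, ← Finset.mul_sum,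
            shift_sum (fun k => ‖u j k‖ ^ 2) K (by simp [hv0 j]) (by simp [hvK j])]
          rw [← Finset.mul_sum]
          ring
        rw [Finset.sum_congr rfl fun j _ => inner j]
        rw [hS, Finset.mul_sum]
        exact Finset.sum_congr rfl fun j _ => (Finset.mul_sum _ _ _).symm
      linarith
    calc Ty ^ 2 ≤ (∑ p ∈ range J ×ˢ range K,
          (‖u p.1 (p.2+1)‖ + ‖u p.1 p.2‖) ^ 2) *
          ∑ p ∈ range J ×ˢ range K, ‖u p.1 (p.2+1) - u p.1 p.2‖ ^ 2 := by
            rw [e1]; exact hcs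
      _ ≤ 4 * S * Dy := by
            rw [e2]; exact mul_le_mul_of_nonneg_right e3 hDynn
  -- Step 6: P^2 ≤ S^2 * Dx * Dy
  have hPsq : P ^ 2 ≤ S ^ 2 * (Dx * Dy) :=
    gn_sq P S Dx Dy Tx Ty hkey hPnn hTx2 hTy2 hSnn hDxnn hDynn hTynn
  -- Step 7: conclude
  have hgrad : gradSq Δx Δy J K u = Δx * Δy * (Dx / Δx ^ 2 + Dy / Δy ^ 2) := by
    rw [gradSq]
    congr 1
    rw [hDx, hDy]
    have term : ∀ j k, ‖(u (j+1) k - u j k) / (Δx : ℂ)‖ ^ 2 +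
        ‖(u j (k+1) - u j k) / (Δy : ℂ)‖ ^ 2
        = ‖u (j+1) k - u j k‖ ^ 2 / Δx ^ 2
          + ‖u j (k+1) - u j k‖ ^ 2 / Δy ^ 2 := by
      intro j k
      rw [norm_div, norm_div, Complex.norm_real, Complex.norm_real, Real.norm_eq_abs, Real.norm_eq_abs,
        _root_.abs_of_pos hΔx', _root_.abs_of_pos hΔy', div_pow, div_pow]
    rw [Finset.sum_congr rfl fun j _ => Finset.sum_congr rfl fun k _ => term j k]
    rw [Finset.sum_div, Finset.sum_div, ← Finset.sum_add_distrib]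
    refine Finset.sum_congr rfl fun j _ => ?_
    rw [Finset.sum_div, Finset.sum_div, ← Finset.sum_add_distrib]
  have hn4 : normP Δx Δy J K 4 u = Δx * Δy * P := rfl
  have hn2 : normP Δx Δy J K 2 u = Δx * Δy * S := rfl
  rw [hn4, hn2, hgrad]
  set X : ℝ := Δy * Dx / Δx with hX
  set Y : ℝ := Δx * Dy / Δy with hY
  have hXnn : 0 ≤ X := by positivity
  have hYnn : 0 ≤ Y := by positivity
  have hXY : X * Y = Dx * Dy := by
    rw [hX, hY]; field_simp
  have hsum : Δx * Δy * (Dx / Δx ^ 2 + Dy / Δy ^ 2) = X + Y := by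
    rw [hX, hY]; field_simp
  rw [hsum]
  have hP2' : P ^ 2 ≤ S ^ 2 * (X * Y) := by rw [hXY]; exact hPsq
  exact gn_final (Δx * Δy) P S X Y (le_of_lt (mul_pos hΔx' hΔy'))
    (gn_amgm P S X Y hPnn hSnn hXnn hYnn hP2')
end
end

section
/- For every u ∈ X_JK one has the discrete Gagliardo–Nirenberg-type inequality ‖u‖⁸_{8,h} ≤ 2 · ‖u‖⁶_{6,h} · ‖δ⁺u‖²_{2,h}. -/
noncomputable section

open Finset Complex ComplexConjugate

lemma tele_aux (J : ℕ) (g : ℕ → ℝ) (h0 : g 0 = 0) (hJ : g J = 0) (j : ℕ) (hj : j < J) :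
    2 * g j ≤ ∑ i ∈ Finset.range J, |g (i + 1) - g i| := by
  have h1 : ∑ i ∈ Finset.range j, (g (i + 1) - g i) = g j := by
    rw [Finset.sum_range_sub, h0, sub_zero]
  have h2 : ∑ i ∈ Finset.range J, (g (i + 1) - g i) = 0 := by
    rw [Finset.sum_range_sub, h0, hJ, sub_zero]
  have hsplit : ∑ i ∈ Finset.range j, (g (i + 1) - g i)
      + ∑ i ∈ Finset.Ico j J, (g (i + 1) - g i)
      = ∑ i ∈ Finset.range J, (g (i + 1) - g i) := by
    simp only [Finset.range_eq_Ico]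
    exact Finset.sum_Ico_consecutive _ (Nat.zero_le j) hj.le
  have hIco : ∑ i ∈ Finset.Ico j J, (g (i + 1) - g i) = -g j := by
    rw [h2, h1] at hsplit; linarith
  have e1 : g j ≤ ∑ i ∈ Finset.range j, |g (i + 1) - g i| := by
    calc g j = ∑ i ∈ Finset.range j, (g (i + 1) - g i) := h1.symm
      _ ≤ |∑ i ∈ Finset.range j, (g (i + 1) - g i)| := le_abs_self _
      _ ≤ ∑ i ∈ Finset.range j, |g (i + 1) - g i| := Finset.abs_sum_le_sum_abs _ _
  have e2 : g j ≤ ∑ i ∈ Finset.Ico j J, |g (i + 1) - g i| := by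
    calc g j ≤ |(-g j)| := by rw [abs_neg]; exact le_abs_self _
      _ = |∑ i ∈ Finset.Ico j J, (g (i + 1) - g i)| := by rw [hIco]
      _ ≤ ∑ i ∈ Finset.Ico j J, |g (i + 1) - g i| := Finset.abs_sum_le_sum_abs _ _
  have hsplit' : ∑ i ∈ Finset.range j, |g (i + 1) - g i|
      + ∑ i ∈ Finset.Ico j J, |g (i + 1) - g i|
      = ∑ i ∈ Finset.range J, |g (i + 1) - g i| := by
    simp only [Finset.range_eq_Ico]
    exact Finset.sum_Ico_consecutive _ (Nat.zero_le j) hj.le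
  linarith

lemma shift_aux (J : ℕ) (g : ℕ → ℝ) (h0 : g 0 = 0) (hJ : g J = 0) :
    ∑ i ∈ Finset.range J, g (i + 1) = ∑ i ∈ Finset.range J, g i := by
  cases J with
  | zero => simp
  | succ n =>
    have h := Finset.sum_range_succ' g (n + 1)
    rw [Finset.sum_range_succ g (n + 1), hJ, add_zero] at h
    rw [h, h0, add_zero]

lemma abs4_aux (z w : ℂ) :
    |‖z‖ ^ 4 - ‖w‖ ^ 4| ≤
      2 * (‖z‖ ^ 3 + ‖w‖ ^ 3) * ‖z - w‖ := by
  set A := ‖z‖ with hA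
  set B := ‖w‖ with hB
  have ha : 0 ≤ A := norm_nonneg z
  have hb : 0 ≤ B := norm_nonneg w
  have hab : |A - B| ≤ ‖z - w‖ := abs_norm_sub_norm_le z w
  have key : |A ^ 4 - B ^ 4| ≤ 2 * (A ^ 3 + B ^ 3) * |A - B| := by
    rcases le_total B A with h | h
    · rw [_root_.abs_of_nonneg (by nlinarith [pow_le_pow_left₀ hb h 4]),
        _root_.abs_of_nonneg (by linarith)]
      have h3 : 0 ≤ (A - B) ^ 3 * (A + B) :=
        mul_nonneg (pow_nonneg (by linarith) 3) (by linarith)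
      nlinarith [h3]
    · rw [_root_.abs_of_nonpos (by nlinarith [pow_le_pow_left₀ ha h 4]),
        _root_.abs_of_nonpos (by linarith)]
      have h3 : 0 ≤ (B - A) ^ 3 * (A + B) :=
        mul_nonneg (pow_nonneg (by linarith) 3) (by linarith)
      nlinarith [h3]
  calc |A ^ 4 - B ^ 4| ≤ 2 * (A ^ 3 + B ^ 3) * |A - B| := key
    _ ≤ 2 * (A ^ 3 + B ^ 3) * ‖z - w‖ :=
      mul_le_mul_of_nonneg_left hab (by positivity)

lemma core_aux (J K : ℕ) (u : ℕ → ℕ → ℂ)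
    (h1 : ∀ k, u 0 k = 0) (h2 : ∀ k, u J k = 0)
    (h3 : ∀ j, u j 0 = 0) (h4 : ∀ j, u j K = 0) :
    ∑ j ∈ range J, ∑ k ∈ range K, ‖u j k‖ ^ 8 ≤
      (∑ j ∈ range J, ∑ k ∈ range K,
          (‖u (j + 1) k‖ ^ 3 + ‖u j k‖ ^ 3) *
            ‖u (j + 1) k - u j k‖) *
      ∑ j ∈ range J, ∑ k ∈ range K,
          (‖u j (k + 1)‖ ^ 3 + ‖u j k‖ ^ 3) *
            ‖u j (k + 1) - u j k‖ := by
  have hA : ∀ k, ∀ j ∈ range J, ‖u j k‖ ^ 4 ≤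
      ∑ i ∈ range J, (‖u (i + 1) k‖ ^ 3 + ‖u i k‖ ^ 3) *
        ‖u (i + 1) k - u i k‖ := by
    intro k j hj
    have t1 := tele_aux J (fun i => ‖u i k‖ ^ 4) (by simp [h1])
      (by simp [h2]) j (mem_range.mp hj)
    have t2 : ∑ i ∈ range J, |‖u (i + 1) k‖ ^ 4 - ‖u i k‖ ^ 4| ≤
        2 * ∑ i ∈ range J, (‖u (i + 1) k‖ ^ 3 + ‖u i k‖ ^ 3) *
          ‖u (i + 1) k - u i k‖ := by
      rw [Finset.mul_sum]
      refine Finset.sum_le_sum fun i _ => ?_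
      rw [← mul_assoc]
      exact abs4_aux (u (i + 1) k) (u i k)
    linarith
  have hB : ∀ j, ∀ k ∈ range K, ‖u j k‖ ^ 4 ≤
      ∑ i ∈ range K, (‖u j (i + 1)‖ ^ 3 + ‖u j i‖ ^ 3) *
        ‖u j (i + 1) - u j i‖ := by
    intro j k hk
    have t1 := tele_aux K (fun i => ‖u j i‖ ^ 4) (by simp [h3])
      (by simp [h4]) k (mem_range.mp hk)
    have t2 : ∑ i ∈ range K, |‖u j (i + 1)‖ ^ 4 - ‖u j i‖ ^ 4| ≤
        2 * ∑ i ∈ range K, (‖u j (i + 1)‖ ^ 3 + ‖u j i‖ ^ 3) *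
          ‖u j (i + 1) - u j i‖ := by
      rw [Finset.mul_sum]
      refine Finset.sum_le_sum fun i _ => ?_
      rw [← mul_assoc]
      exact abs4_aux (u j (i + 1)) (u j i)
    linarith
  have hAnn : ∀ k, 0 ≤ ∑ i ∈ range J,
      (‖u (i + 1) k‖ ^ 3 + ‖u i k‖ ^ 3) *
        ‖u (i + 1) k - u i k‖ := by
    intro k
    refine Finset.sum_nonneg fun i _ => mul_nonneg ?_ (norm_nonneg _)
    exact add_nonneg (pow_nonneg (norm_nonneg _) 3) (pow_nonneg (norm_nonneg _) 3)
  calc ∑ j ∈ range J, ∑ k ∈ range K, ‖u j k‖ ^ 8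
      ≤ ∑ j ∈ range J, ∑ k ∈ range K,
          (∑ i ∈ range J, (‖u (i + 1) k‖ ^ 3 + ‖u i k‖ ^ 3) *
            ‖u (i + 1) k - u i k‖) *
          (∑ i ∈ range K, (‖u j (i + 1)‖ ^ 3 + ‖u j i‖ ^ 3) *
            ‖u j (i + 1) - u j i‖) := by
        refine Finset.sum_le_sum fun j hj => Finset.sum_le_sum fun k hk => ?_
        have e : ‖u j k‖ ^ 8 = ‖u j k‖ ^ 4 * ‖u j k‖ ^ 4 := by
          ring
        rw [e]
        exact mul_le_mul (hA k j hj) (hB j k hk) (by positivity)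
          (le_trans (by positivity) (hA k j hj))
    _ = ∑ j ∈ range J,
          (∑ k ∈ range K, ∑ i ∈ range J,
            (‖u (i + 1) k‖ ^ 3 + ‖u i k‖ ^ 3) *
              ‖u (i + 1) k - u i k‖) *
          (∑ i ∈ range K, (‖u j (i + 1)‖ ^ 3 + ‖u j i‖ ^ 3) *
            ‖u j (i + 1) - u j i‖) := by
        refine Finset.sum_congr rfl fun j _ => (Finset.sum_mul _ _ _).symm
    _ = (∑ k ∈ range K, ∑ i ∈ range J,
          (‖u (i + 1) k‖ ^ 3 + ‖u i k‖ ^ 3) *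
            ‖u (i + 1) k - u i k‖) *
        ∑ j ∈ range J, ∑ i ∈ range K,
          (‖u j (i + 1)‖ ^ 3 + ‖u j i‖ ^ 3) *
            ‖u j (i + 1) - u j i‖ := (Finset.mul_sum _ _ _).symm
    _ = _ := by
        congr 1
        exact Finset.sum_comm

lemma csx_aux (J K : ℕ) (u : ℕ → ℕ → ℂ)
    (h1 : ∀ k, u 0 k = 0) (h2 : ∀ k, u J k = 0) :
    (∑ j ∈ range J, ∑ k ∈ range K,
        (‖u (j + 1) k‖ ^ 3 + ‖u j k‖ ^ 3) *
          ‖u (j + 1) k - u j k‖) ^ 2 ≤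
      4 * (∑ j ∈ range J, ∑ k ∈ range K, ‖u j k‖ ^ 6) *
        ∑ j ∈ range J, ∑ k ∈ range K, ‖u (j + 1) k - u j k‖ ^ 2 := by
  have cs := Finset.sum_mul_sq_le_sq_mul_sq ((range J) ×ˢ (range K))
    (fun p => ‖u (p.1 + 1) p.2‖ ^ 3 + ‖u p.1 p.2‖ ^ 3)
    (fun p => ‖u (p.1 + 1) p.2 - u p.1 p.2‖)
  rw [Finset.sum_product, Finset.sum_product, Finset.sum_product] at cs
  refine cs.trans ?_
  have hEnn : 0 ≤ ∑ j ∈ range J, ∑ k ∈ range K, ‖u (j + 1) k - u j k‖ ^ 2 :=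
    Finset.sum_nonneg fun j _ => Finset.sum_nonneg fun k _ => sq_nonneg _
  refine mul_le_mul_of_nonneg_right ?_ hEnn
  have step : ∑ j ∈ range J, ∑ k ∈ range K,
      (‖u (j + 1) k‖ ^ 3 + ‖u j k‖ ^ 3) ^ 2 ≤
      ∑ j ∈ range J, ∑ k ∈ range K,
        (2 * ‖u (j + 1) k‖ ^ 6 + 2 * ‖u j k‖ ^ 6) :=
    Finset.sum_le_sum fun j _ => Finset.sum_le_sum fun k _ => by
      nlinarith [sq_nonneg (‖u (j + 1) k‖ ^ 3 - ‖u j k‖ ^ 3)]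
  refine step.trans ?_
  have hshift : ∑ j ∈ range J, ∑ k ∈ range K, ‖u (j + 1) k‖ ^ 6
      = ∑ j ∈ range J, ∑ k ∈ range K, ‖u j k‖ ^ 6 := by
    rw [Finset.sum_comm]
    rw [show (∑ k ∈ range K, ∑ j ∈ range J, ‖u (j + 1) k‖ ^ 6)
        = ∑ k ∈ range K, ∑ j ∈ range J, ‖u j k‖ ^ 6 from
      Finset.sum_congr rfl fun k _ =>
        shift_aux J (fun j => ‖u j k‖ ^ 6) (by simp [h1]) (by simp [h2])]
    rw [Finset.sum_comm]
  have expand : ∑ j ∈ range J, ∑ k ∈ range K,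
      (2 * ‖u (j + 1) k‖ ^ 6 + 2 * ‖u j k‖ ^ 6)
      = 2 * (∑ j ∈ range J, ∑ k ∈ range K, ‖u (j + 1) k‖ ^ 6)
        + 2 * ∑ j ∈ range J, ∑ k ∈ range K, ‖u j k‖ ^ 6 := by
    simp [Finset.sum_add_distrib, Finset.mul_sum]
  rw [expand, hshift]
  linarith

lemma csy_aux (J K : ℕ) (u : ℕ → ℕ → ℂ)
    (h3 : ∀ j, u j 0 = 0) (h4 : ∀ j, u j K = 0) :
    (∑ j ∈ range J, ∑ k ∈ range K,
        (‖u j (k + 1)‖ ^ 3 + ‖u j k‖ ^ 3) *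
          ‖u j (k + 1) - u j k‖) ^ 2 ≤
      4 * (∑ j ∈ range J, ∑ k ∈ range K, ‖u j k‖ ^ 6) *
        ∑ j ∈ range J, ∑ k ∈ range K, ‖u j (k + 1) - u j k‖ ^ 2 := by
  have h := csx_aux K J (fun k j => u j k) h3 h4
  have e1 : (∑ a ∈ range K, ∑ b ∈ range J,
      (‖u b (a + 1)‖ ^ 3 + ‖u b a‖ ^ 3) *
        ‖u b (a + 1) - u b a‖)
      = ∑ b ∈ range J, ∑ a ∈ range K,
      (‖u b (a + 1)‖ ^ 3 + ‖u b a‖ ^ 3) *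
        ‖u b (a + 1) - u b a‖ := Finset.sum_comm
  have e2 : (∑ a ∈ range K, ∑ b ∈ range J, ‖u b a‖ ^ 6)
      = ∑ b ∈ range J, ∑ a ∈ range K, ‖u b a‖ ^ 6 := Finset.sum_comm
  have e3 : (∑ a ∈ range K, ∑ b ∈ range J, ‖u b (a + 1) - u b a‖ ^ 2)
      = ∑ b ∈ range J, ∑ a ∈ range K, ‖u b (a + 1) - u b a‖ ^ 2 :=
    Finset.sum_comm
  rw [e1, e2, e3] at h
  exact h

/-- For `u ∈ X_JK`, `‖u‖⁸_{8,h} ≤ 2·‖u‖⁶_{6,h}·‖δ⁺u‖²_{2,h}`. -/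
theorem stmt2 (J K : ℕ) (hJ : 2 ≤ J) (hK : 2 ≤ K) (a b c d : ℝ) (hab : a < b) (hcd : c < d)
    (Δx Δy : ℝ) (hΔx : Δx = (b - a) / J) (hΔy : Δy = (d - c) / K)
    (u : ℕ → ℕ → ℂ) (hu : memX J K u) :
    normP Δx Δy J K 8 u ≤ 2 * normP Δx Δy J K 6 u * gradSq Δx Δy J K u := by
  obtain ⟨h1, h2, h3, h4⟩ := hu
  have hJ0 : (0 : ℝ) < (J : ℝ) := by
    have : 0 < J := by omega
    exact_mod_cast this
  have hK0 : (0 : ℝ) < (K : ℝ) := by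
    have : 0 < K := by omega
    exact_mod_cast this
  have hΔx0 : 0 < Δx := by rw [hΔx]; exact div_pos (by linarith) hJ0
  have hΔy0 : 0 < Δy := by rw [hΔy]; exact div_pos (by linarith) hK0
  have hcore := core_aux J K u h1 h2 h3 h4
  have hx := csx_aux J K u h1 h2
  have hy := csy_aux J K u h3 h4
  simp only [normP, gradSq]
  have hgs : ∑ j ∈ range J, ∑ k ∈ range K,
      (‖(u (j + 1) k - u j k) / (Δx : ℂ)‖ ^ 2 +
        ‖(u j (k + 1) - u j k) / (Δy : ℂ)‖ ^ 2)
      = (∑ j ∈ range J, ∑ k ∈ range K, ‖u (j + 1) k - u j k‖ ^ 2) / Δx ^ 2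
        + (∑ j ∈ range J, ∑ k ∈ range K, ‖u j (k + 1) - u j k‖ ^ 2) / Δy ^ 2 := by
    rw [Finset.sum_div, Finset.sum_div, ← Finset.sum_add_distrib]
    refine Finset.sum_congr rfl fun j _ => ?_
    rw [Finset.sum_div, Finset.sum_div, ← Finset.sum_add_distrib]
    refine Finset.sum_congr rfl fun k _ => ?_
    rw [norm_div, norm_div, Complex.norm_real, Complex.norm_real, Real.norm_eq_abs, Real.norm_eq_abs,
      abs_of_pos hΔx0, abs_of_pos hΔy0, div_pow, div_pow]
  rw [hgs]
  have hcnn : ∀ (w : ℕ → ℕ → ℂ), 0 ≤ ∑ j ∈ range J, ∑ k ∈ range K,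
      (‖w (j + 1) k‖ ^ 3 + ‖w j k‖ ^ 3) *
        ‖w (j + 1) k - w j k‖ := fun w =>
    Finset.sum_nonneg fun j _ => Finset.sum_nonneg fun k _ =>
      mul_nonneg (add_nonneg (pow_nonneg (norm_nonneg _) 3)
        (pow_nonneg (norm_nonneg _) 3)) (norm_nonneg _)
  have hSxnn : 0 ≤ ∑ j ∈ range J, ∑ k ∈ range K,
      (‖u (j + 1) k‖ ^ 3 + ‖u j k‖ ^ 3) *
        ‖u (j + 1) k - u j k‖ := hcnn u
  have hSynn : 0 ≤ ∑ j ∈ range J, ∑ k ∈ range K,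
      (‖u j (k + 1)‖ ^ 3 + ‖u j k‖ ^ 3) *
        ‖u j (k + 1) - u j k‖ :=
    Finset.sum_nonneg fun j _ => Finset.sum_nonneg fun k _ =>
      mul_nonneg (add_nonneg (pow_nonneg (norm_nonneg _) 3)
        (pow_nonneg (norm_nonneg _) 3)) (norm_nonneg _)
  have hV6nn : 0 ≤ ∑ j ∈ range J, ∑ k ∈ range K, ‖u j k‖ ^ 6 :=
    Finset.sum_nonneg fun j _ => Finset.sum_nonneg fun k _ => by positivity
  have hN8nn : 0 ≤ ∑ j ∈ range J, ∑ k ∈ range K, ‖u j k‖ ^ 8 :=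
    Finset.sum_nonneg fun j _ => Finset.sum_nonneg fun k _ => by positivity
  have hExnn : 0 ≤ ∑ j ∈ range J, ∑ k ∈ range K, ‖u (j + 1) k - u j k‖ ^ 2 :=
    Finset.sum_nonneg fun j _ => Finset.sum_nonneg fun k _ => sq_nonneg _
  have hEynn : 0 ≤ ∑ j ∈ range J, ∑ k ∈ range K, ‖u j (k + 1) - u j k‖ ^ 2 :=
    Finset.sum_nonneg fun j _ => Finset.sum_nonneg fun k _ => sq_nonneg _
  clear hcnn
  set N8 := ∑ j ∈ range J, ∑ k ∈ range K, ‖u j k‖ ^ 8 with hN8def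
  set V6 := ∑ j ∈ range J, ∑ k ∈ range K, ‖u j k‖ ^ 6 with hV6def
  set Sx := ∑ j ∈ range J, ∑ k ∈ range K,
      (‖u (j + 1) k‖ ^ 3 + ‖u j k‖ ^ 3) *
        ‖u (j + 1) k - u j k‖ with hSxdef
  set Sy := ∑ j ∈ range J, ∑ k ∈ range K,
      (‖u j (k + 1)‖ ^ 3 + ‖u j k‖ ^ 3) *
        ‖u j (k + 1) - u j k‖ with hSydef
  set Ex := ∑ j ∈ range J, ∑ k ∈ range K, ‖u (j + 1) k - u j k‖ ^ 2 with hExdef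
  set Ey := ∑ j ∈ range J, ∑ k ∈ range K, ‖u j (k + 1) - u j k‖ ^ 2 with hEydef
  clear_value N8 V6 Sx Sy Ex Ey
  have hΔxne : Δx ≠ 0 := ne_of_gt hΔx0
  have hΔyne : Δy ≠ 0 := ne_of_gt hΔy0
  have hPQ : (Δy / Δx * Ex) * (Δx / Δy * Ey) = Ex * Ey := by
    field_simp
  have hRnn : 0 ≤ 2 * V6 * (Δy / Δx * Ex + Δx / Δy * Ey) := by
    refine mul_nonneg (by linarith) (add_nonneg ?_ ?_)
    · exact mul_nonneg (le_of_lt (div_pos hΔy0 hΔx0)) hExnn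
    · exact mul_nonneg (le_of_lt (div_pos hΔx0 hΔy0)) hEynn
  have key : Sx * Sy ≤ 2 * V6 * (Δy / Δx * Ex + Δx / Δy * Ey) := by
    have hsq : (Sx * Sy) ^ 2 ≤ (2 * V6 * (Δy / Δx * Ex + Δx / Δy * Ey)) ^ 2 := by
      have h2' : Sx ^ 2 * Sy ^ 2 ≤ (4 * V6 * Ex) * (4 * V6 * Ey) :=
        mul_le_mul hx hy (sq_nonneg _)
          (mul_nonneg (mul_nonneg (by norm_num) hV6nn) hExnn)
      nlinarith [hPQ, h2',
        mul_nonneg (sq_nonneg V6) (sq_nonneg (Δy / Δx * Ex - Δx / Δy * Ey))]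
    exact (pow_le_pow_iff_left₀ (mul_nonneg hSxnn hSynn) hRnn two_ne_zero).mp hsq
  have hxy0 : 0 ≤ Δx * Δy := mul_nonneg hΔx0.le hΔy0.le
  calc Δx * Δy * N8 ≤ Δx * Δy * (Sx * Sy) := mul_le_mul_of_nonneg_left hcore hxy0
    _ ≤ Δx * Δy * (2 * V6 * (Δy / Δx * Ex + Δx / Δy * Ey)) :=
        mul_le_mul_of_nonneg_left key hxy0
    _ = 2 * (Δx * Δy * V6) * (Δx * Δy * (Ex / Δx ^ 2 + Ey / Δy ^ 2)) := by
        field_simp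
end
end

section
/- Let u ∈ X_JK, let p be a positive integer, and let (j,k) be any index with 0 ≤ j ≤ J, 0 ≤ k ≤ K. Then |u_{j,k}|^p ≤ (p/2) · Δx · ( Σ_{l=0}^{J−1} |δ⁺_x u_{l,k}|² )^{1/2} · ( Σ_{l=0}^{J−1} |u_{l,k}|^{2(p−1)} )^{1/2}. -/
noncomputable section

open Finset Complex ComplexConjugate

lemma pairterm {a b : ℝ} (hb : 0 ≤ b) (hba : b ≤ a) (q i : ℕ) (hi : i ≤ q) :
    a ^ i * b ^ (q - i) + a ^ (q - i) * b ^ i ≤ a ^ q + b ^ q := by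
  have ha : 0 ≤ a := hb.trans hba
  have h1 : b ^ i ≤ a ^ i := pow_le_pow_left₀ hb hba i
  have h2 : b ^ (q - i) ≤ a ^ (q - i) := pow_le_pow_left₀ hb hba _
  have key : 0 ≤ (a ^ i - b ^ i) * (a ^ (q - i) - b ^ (q - i)) :=
    mul_nonneg (by linarith) (by linarith)
  have ea : a ^ i * a ^ (q - i) = a ^ q := by rw [← pow_add]; congr 1; omega
  have eb : b ^ i * b ^ (q - i) = b ^ q := by rw [← pow_add]; congr 1; omega
  nlinarith [key, ea, eb]

lemma geom_bound {a b : ℝ} (hb : 0 ≤ b) (hba : b ≤ a) (p : ℕ) :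
    ∑ i ∈ range p, a ^ i * b ^ (p - 1 - i) ≤ (p : ℝ) / 2 * (a ^ (p - 1) + b ^ (p - 1)) := by
  have hrefl : ∑ i ∈ range p, a ^ (p - 1 - i) * b ^ (p - 1 - (p - 1 - i)) =
      ∑ i ∈ range p, a ^ i * b ^ (p - 1 - i) :=
    Finset.sum_range_reflect (fun i => a ^ i * b ^ (p - 1 - i)) p
  have h2 : 2 * ∑ i ∈ range p, a ^ i * b ^ (p - 1 - i) ≤ (p : ℝ) * (a ^ (p - 1) + b ^ (p - 1)) := by
    have : 2 * ∑ i ∈ range p, a ^ i * b ^ (p - 1 - i) =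
        ∑ i ∈ range p, (a ^ i * b ^ (p - 1 - i) + a ^ (p - 1 - i) * b ^ (p - 1 - (p - 1 - i))) := by
      rw [Finset.sum_add_distrib, hrefl]; ring
    rw [this]
    calc ∑ i ∈ range p, (a ^ i * b ^ (p - 1 - i) + a ^ (p - 1 - i) * b ^ (p - 1 - (p - 1 - i)))
        ≤ ∑ i ∈ range p, (a ^ (p - 1) + b ^ (p - 1)) := by
          apply Finset.sum_le_sum
          intro i hi
          rw [Finset.mem_range] at hi
          have hip : i ≤ p - 1 := by omega
          have : p - 1 - (p - 1 - i) = i := by omega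
          rw [this]
          exact pairterm hb hba (p - 1) i hip
      _ = (p : ℝ) * (a ^ (p - 1) + b ^ (p - 1)) := by
          rw [Finset.sum_const, Finset.card_range]; simp [nsmul_eq_mul]; ring
  linarith

lemma pow_sub_pow_bound {a b : ℝ} (ha : 0 ≤ a) (hb : 0 ≤ b) (p : ℕ) :
    |a ^ p - b ^ p| ≤ (p : ℝ) / 2 * |a - b| * (a ^ (p - 1) + b ^ (p - 1)) := by
  wlog hba : b ≤ a with H
  · have := H hb ha p (le_of_not_ge hba)
    rw [_root_.abs_sub_comm (b ^ p), _root_.abs_sub_comm b a] at this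
    linarith [this]
  rw [_root_.abs_of_nonneg (sub_nonneg.2 (pow_le_pow_left₀ hb hba p)),
      _root_.abs_of_nonneg (sub_nonneg.2 hba)]
  have hg := geom_sum₂_mul a b p
  have hge := geom_bound hb hba p
  calc a ^ p - b ^ p = (∑ i ∈ range p, a ^ i * b ^ (p - 1 - i)) * (a - b) := hg.symm
    _ ≤ ((p : ℝ) / 2 * (a ^ (p - 1) + b ^ (p - 1))) * (a - b) := by
        apply mul_le_mul_of_nonneg_right hge (by linarith)
    _ = (p : ℝ) / 2 * (a - b) * (a ^ (p - 1) + b ^ (p - 1)) := by ring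

lemma tele_bound {J : ℕ} (g : ℕ → ℝ) (h0 : g 0 = 0) (hJ : g J = 0) (j : ℕ) (hj : j ≤ J) :
    g j ≤ 2⁻¹ * ∑ l ∈ range J, |g (l + 1) - g l| := by
  have t1 : ∑ l ∈ range j, (g (l + 1) - g l) = g j := by
    rw [Finset.sum_range_sub g j, h0, sub_zero]
  have tJ : ∑ l ∈ range J, (g (l + 1) - g l) = 0 := by
    rw [Finset.sum_range_sub g J, h0, hJ, sub_zero]
  have hsplit : ∑ l ∈ Finset.Ico 0 j, (g (l + 1) - g l) + ∑ l ∈ Finset.Ico j J, (g (l + 1) - g l)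
      = ∑ l ∈ Finset.Ico 0 J, (g (l + 1) - g l) :=
    Finset.sum_Ico_consecutive _ (Nat.zero_le j) hj
  simp only [← Finset.range_eq_Ico] at hsplit
  rw [t1, tJ] at hsplit
  have habs1 : |∑ l ∈ range j, (g (l + 1) - g l)| ≤ ∑ l ∈ range j, |g (l + 1) - g l| :=
    Finset.abs_sum_le_sum_abs _ _
  have habs2 : |∑ l ∈ Finset.Ico j J, (g (l + 1) - g l)| ≤ ∑ l ∈ Finset.Ico j J, |g (l + 1) - g l| :=
    Finset.abs_sum_le_sum_abs _ _
  have hsplitabs : ∑ l ∈ range j, |g (l + 1) - g l| + ∑ l ∈ Finset.Ico j J, |g (l + 1) - g l|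
      = ∑ l ∈ range J, |g (l + 1) - g l| := by
    simp only [Finset.range_eq_Ico]
    exact Finset.sum_Ico_consecutive _ (Nat.zero_le j) hj
  rw [t1] at habs1
  have h1 := _root_.le_abs_self (g j)
  have h2 : -(∑ l ∈ Finset.Ico j J, (g (l + 1) - g l)) = g j := by linarith
  have h3 := _root_.neg_le_abs (∑ l ∈ Finset.Ico j J, (g (l + 1) - g l))
  linarith [_root_.abs_nonneg (g j)]

lemma cs_sqrt {s : Finset ℕ} (f g : ℕ → ℝ) :
    ∑ i ∈ s, f i * g i ≤ Real.sqrt (∑ i ∈ s, f i ^ 2) * Real.sqrt (∑ i ∈ s, g i ^ 2) := by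
  have h := Finset.sum_mul_sq_le_sq_mul_sq s f g
  rcases le_or_gt (∑ i ∈ s, f i * g i) 0 with h0 | h0
  · exact h0.trans (mul_nonneg (Real.sqrt_nonneg _) (Real.sqrt_nonneg _))
  · rw [← Real.sqrt_mul (Finset.sum_nonneg fun i _ => sq_nonneg (f i))]
    exact Real.le_sqrt_of_sq_le h

lemma sum_shift {J : ℕ} (g : ℕ → ℝ) (h0 : g 0 = 0) (hJ : g J = 0) :
    ∑ l ∈ range J, g (l + 1) = ∑ l ∈ range J, g l := by
  have h1 := Finset.sum_range_succ' g J
  have h2 := Finset.sum_range_succ g J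
  rw [h0] at h1; rw [hJ] at h2
  linarith

/-- pointwise bound
`|u_{j,k}|^p ≤ (p/2)·Δx·(Σ_{l<J} |δ⁺_x u_{l,k}|²)^{1/2}·(Σ_{l<J} |u_{l,k}|^{2(p−1)})^{1/2}`. -/
theorem stmt3 (J K : ℕ) (hJ : 2 ≤ J) (hK : 2 ≤ K) (a b c d : ℝ) (hab : a < b) (hcd : c < d)
    (Δx Δy : ℝ) (hΔx : Δx = (b - a) / J) (hΔy : Δy = (d - c) / K)
    (u : ℕ → ℕ → ℂ) (hu : memX J K u) (p : ℕ) (hp : 0 < p)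
    (j k : ℕ) (hj : j ≤ J) (hk : k ≤ K) :
    ‖u j k‖ ^ p ≤
      (p : ℝ) / 2 * Δx *
        Real.sqrt (∑ l ∈ Finset.range J, ‖(u (l + 1) k - u l k) / (Δx : ℂ)‖ ^ 2) *
        Real.sqrt (∑ l ∈ Finset.range J, ‖u l k‖ ^ (2 * (p - 1))) := by
  have hJ0 : 0 < J := by omega
  have hΔxpos : 0 < Δx := by
    rw [hΔx]
    apply div_pos (by linarith)
    exact_mod_cast hJ0
  set f : ℕ → ℝ := fun l => ‖u l k‖ with hfdef
  set e : ℕ → ℝ := fun l => ‖u (l + 1) k - u l k‖ with hedef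
  have hf0 : f 0 = 0 := by simp [hfdef, hu.1 k]
  have hfJ : f J = 0 := by simp [hfdef, hu.2.1 k]
  have hfnn : ∀ l, 0 ≤ f l := fun l => norm_nonneg _
  have henn : ∀ l, 0 ≤ e l := fun l => norm_nonneg _
  set A : ℝ := ∑ l ∈ Finset.range J, e l ^ 2 with hAdef
  set B : ℝ := ∑ l ∈ Finset.range J, f l ^ (2 * (p - 1)) with hBdef
  have hAnn : 0 ≤ A := Finset.sum_nonneg fun l _ => sq_nonneg _
  -- rewrite the δ⁺ sum
  have hsumδ : ∑ l ∈ Finset.range J, ‖(u (l + 1) k - u l k) / (Δx : ℂ)‖ ^ 2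
      = A / Δx ^ 2 := by
    rw [hAdef, Finset.sum_div]
    refine Finset.sum_congr rfl fun l _ => ?_
    rw [norm_div, Complex.norm_real, Real.norm_eq_abs, abs_of_pos hΔxpos, div_pow]
  have hsqrtδ : Real.sqrt (∑ l ∈ Finset.range J, ‖(u (l + 1) k - u l k) / (Δx : ℂ)‖ ^ 2)
      = Real.sqrt A / Δx := by
    rw [hsumδ, Real.sqrt_div hAnn, Real.sqrt_sq hΔxpos.le]
  rw [hsqrtδ]
  have hRHS : (p : ℝ) / 2 * Δx * (Real.sqrt A / Δx) * Real.sqrt B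
      = (p : ℝ) / 2 * (Real.sqrt A * Real.sqrt B) := by
    field_simp
  rw [hRHS]
  -- core inequality
  have h1 : f j ^ p ≤ 2⁻¹ * ∑ l ∈ Finset.range J, |f (l + 1) ^ p - f l ^ p| :=
    tele_bound (fun l => f l ^ p) (by simp only [hf0]; exact zero_pow hp.ne')
      (by simp only [hfJ]; exact zero_pow hp.ne') j hj
  have h2 : ∑ l ∈ Finset.range J, |f (l + 1) ^ p - f l ^ p|
      ≤ ∑ l ∈ Finset.range J, (p : ℝ) / 2 * e l * (f (l + 1) ^ (p - 1) + f l ^ (p - 1)) := by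
    refine Finset.sum_le_sum fun l _ => ?_
    have hΔ : |f (l + 1) - f l| ≤ e l := abs_norm_sub_norm_le _ _
    calc |f (l + 1) ^ p - f l ^ p|
        ≤ (p : ℝ) / 2 * |f (l + 1) - f l| * (f (l + 1) ^ (p - 1) + f l ^ (p - 1)) :=
          pow_sub_pow_bound (hfnn _) (hfnn _) p
      _ ≤ (p : ℝ) / 2 * e l * (f (l + 1) ^ (p - 1) + f l ^ (p - 1)) := by
          have h1 : (0:ℝ) ≤ (p:ℝ)/2 := by positivity
          have h2 : (0:ℝ) ≤ f (l + 1) ^ (p - 1) + f l ^ (p - 1) := by positivity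
          exact mul_le_mul_of_nonneg_right (mul_le_mul_of_nonneg_left hΔ h1) h2
  have h3 : ∑ l ∈ Finset.range J, (p : ℝ) / 2 * e l * (f (l + 1) ^ (p - 1) + f l ^ (p - 1))
      = (p : ℝ) / 2 * ((∑ l ∈ Finset.range J, e l * f (l + 1) ^ (p - 1)) +
          ∑ l ∈ Finset.range J, e l * f l ^ (p - 1)) := by
    rw [← Finset.sum_add_distrib, Finset.mul_sum]
    exact Finset.sum_congr rfl fun l _ => by ring
  have hpowsq : ∀ x : ℝ, (x ^ (p - 1)) ^ 2 = x ^ (2 * (p - 1)) := fun x => by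
    rw [← pow_mul, Nat.mul_comm]
  have hcs1 : ∑ l ∈ Finset.range J, e l * f l ^ (p - 1) ≤ Real.sqrt A * Real.sqrt B := by
    have h := cs_sqrt (s := Finset.range J) e (fun l => f l ^ (p - 1))
    have hB : ∑ l ∈ Finset.range J, (f l ^ (p - 1)) ^ 2 = B :=
      Finset.sum_congr rfl fun l _ => hpowsq (f l)
    rwa [hB] at h
  have hcs2 : ∑ l ∈ Finset.range J, e l * f (l + 1) ^ (p - 1) ≤ Real.sqrt A * Real.sqrt B := by
    have h := cs_sqrt (s := Finset.range J) e (fun l => f (l + 1) ^ (p - 1))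
    have hB : ∑ l ∈ Finset.range J, (f (l + 1) ^ (p - 1)) ^ 2 = B := by
      rw [hBdef]
      have h1 : ∑ l ∈ Finset.range J, (f (l + 1) ^ (p - 1)) ^ 2
          = ∑ l ∈ Finset.range J, f (l + 1) ^ (2 * (p - 1)) :=
        Finset.sum_congr rfl fun l _ => hpowsq (f (l + 1))
      rw [h1]
      rcases Nat.eq_zero_or_pos (p - 1) with hq | hq
      · simp [hq]
      · exact sum_shift (fun l => f l ^ (2 * (p - 1)))
          (by simp only [hf0]; exact zero_pow (by omega))
          (by simp only [hfJ]; exact zero_pow (by omega))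
    rwa [hB] at h
  have hpn : (0:ℝ) ≤ (p:ℝ)/2 := by positivity
  calc f j ^ p ≤ 2⁻¹ * ∑ l ∈ Finset.range J, |f (l + 1) ^ p - f l ^ p| := h1
    _ ≤ 2⁻¹ * ((p : ℝ) / 2 * ((∑ l ∈ Finset.range J, e l * f (l + 1) ^ (p - 1)) +
          ∑ l ∈ Finset.range J, e l * f l ^ (p - 1))) := by rw [← h3]; linarith
    _ ≤ 2⁻¹ * ((p : ℝ) / 2 * (Real.sqrt A * Real.sqrt B + Real.sqrt A * Real.sqrt B)) := by
        have := add_le_add hcs2 hcs1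
        nlinarith [this, hpn]
    _ = (p : ℝ) / 2 * (Real.sqrt A * Real.sqrt B) := by ring
end
end

section
/- Let {Uⁿ}_{n=0}^N be a CNFD solution. Then for every 1 ≤ m ≤ N one has the exact discrete mass balance identity (‖Uᵐ‖²_{2,h} − ‖U⁰‖²_{2,h})/(2τ) + ε Σ_{n=0}^{m−1} ‖U^{n+1/2}‖⁴_{4,h} = 0, where U^{n+1/2} = (U^{n+1} + Uⁿ)/2. -/
noncomputable section

open Finset Complex ComplexConjugate

private lemma point_im' (lam ν ε τ : ℝ) (W V L : ℂ)
    (h : Complex.I * (W - V) / (τ : ℂ) + L + (lam : ℂ) * psi1 W V - (ν : ℂ) * psi2 W V +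
      Complex.I * (ε : ℂ) * phi W V = 0) :
    (‖W‖ ^ 2 - ‖V‖ ^ 2) / (2 * τ) + ε * ‖(W + V) / 2‖ ^ 4
      + (L * conj ((W + V) / 2)).im = 0 := by
  have habs2 : ∀ z : ℂ, (‖z‖ : ℝ) ^ 2 = z.re ^ 2 + z.im ^ 2 := by
    intro z; rw [Complex.sq_norm, Complex.normSq_apply]; ring
  have habs4 : ∀ z : ℂ, (‖z‖ : ℝ) ^ 4 = (z.re ^ 2 + z.im ^ 2) ^ 2 := by
    intro z; rw [show (4:ℕ) = 2*2 from rfl, pow_mul, habs2]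
  have h2 : L = -(Complex.I * (W - V) / (τ : ℂ) + (lam : ℂ) * psi1 W V - (ν : ℂ) * psi2 W V +
      Complex.I * (ε : ℂ) * phi W V) := by linear_combination h
  rw [h2]
  simp only [psi1, psi2, phi, habs2, habs4,
    show ∀ z : ℂ, z / 2 = z * ((1/2 : ℝ) : ℂ) from fun z => by push_cast; ring]
  simp only [Complex.mul_im, Complex.mul_re, Complex.add_im, Complex.add_re, Complex.sub_im,
    Complex.sub_re, Complex.neg_im, Complex.neg_re, Complex.div_ofReal_im, Complex.div_ofReal_re,
    Complex.I_re, Complex.I_im, Complex.ofReal_re, Complex.ofReal_im, Complex.conj_re,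
    Complex.conj_im]
  ring

private lemma conj_sum_shift (L : ℕ) (hL : 1 ≤ L) (v : ℕ → ℂ) (h0 : v 0 = 0) (hL0 : v L = 0) :
    ∑ j ∈ range L, v (j - 1) * conj (v j) = conj (∑ j ∈ range L, v (j + 1) * conj (v j)) := by
  obtain ⟨M, rfl⟩ : ∃ M, L = M + 1 := ⟨L - 1, (Nat.succ_pred_eq_of_pos hL).symm⟩
  rw [map_sum, Finset.sum_range_succ', Finset.sum_range_succ]
  simp only [h0, hL0, Nat.add_sub_cancel, map_mul, Complex.conj_conj, map_zero, mul_zero,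
    zero_mul, add_zero]
  exact Finset.sum_congr rfl fun i _ => mul_comm _ _

private lemma lap_sum_real (Δx Δy : ℝ) (J K : ℕ) (hJ : 1 ≤ J) (hK : 1 ≤ K)
    (u : ℕ → ℕ → ℂ) (hu : memX J K u) :
    (∑ j ∈ range J, ∑ k ∈ range K, delta2 Δx Δy u j k * conj (u j k)).im = 0 := by
  obtain ⟨h0, hJ0, hk0, hK0⟩ := hu
  rw [← Complex.conj_eq_iff_im]
  have hre : ∀ j k, delta2 Δx Δy u j k * conj (u j k) =
      u (j + 1) k * conj (u j k) / (Δx : ℂ) ^ 2 + u (j - 1) k * conj (u j k) / (Δx : ℂ) ^ 2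
      + u j (k + 1) * conj (u j k) / (Δy : ℂ) ^ 2 + u j (k - 1) * conj (u j k) / (Δy : ℂ) ^ 2
      - (2 / (Δx : ℂ) ^ 2 + 2 / (Δy : ℂ) ^ 2) * (u j k * conj (u j k)) := by
    intro j k; unfold delta2; ring
  simp only [hre, Finset.sum_add_distrib, Finset.sum_sub_distrib, ← Finset.sum_div,
    ← Finset.mul_sum]
  have hBx : ∑ j ∈ range J, ∑ k ∈ range K, u (j - 1) k * conj (u j k)
      = conj (∑ j ∈ range J, ∑ k ∈ range K, u (j + 1) k * conj (u j k)) := by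
    rw [Finset.sum_comm, show (∑ j ∈ range J, ∑ k ∈ range K, u (j + 1) k * conj (u j k))
      = ∑ k ∈ range K, ∑ j ∈ range J, u (j + 1) k * conj (u j k) from Finset.sum_comm,
      map_sum]
    exact Finset.sum_congr rfl fun k _ => conj_sum_shift J hJ (fun j => u j k) (h0 k) (hJ0 k)
  have hBy : ∑ j ∈ range J, ∑ k ∈ range K, u j (k - 1) * conj (u j k)
      = conj (∑ j ∈ range J, ∑ k ∈ range K, u j (k + 1) * conj (u j k)) := by
    rw [map_sum]
    exact Finset.sum_congr rfl fun j _ => conj_sum_shift K hK (u j) (hk0 j) (hK0 j)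
  have hC : conj (∑ j ∈ range J, ∑ k ∈ range K, u j k * conj (u j k))
      = ∑ j ∈ range J, ∑ k ∈ range K, u j k * conj (u j k) := by
    rw [map_sum]
    refine Finset.sum_congr rfl fun j _ => ?_
    rw [map_sum]
    exact Finset.sum_congr rfl fun k _ => by rw [map_mul, Complex.conj_conj, mul_comm]
  rw [hBx, hBy]
  simp only [map_add, map_sub, map_div₀, map_mul, map_pow, Complex.conj_ofReal, map_ofNat,
    Complex.conj_conj, hC]
  ring

private lemma step_mass (Δx Δy : ℝ) (J K : ℕ) (hJ : 2 ≤ J) (hK : 2 ≤ K)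
    (lam ν ε τ : ℝ) (W V : ℕ → ℕ → ℂ) (hW : memX J K W) (hV : memX J K V)
    (hstep : stepEq Δx Δy J K lam ν ε τ W V) :
    (normP Δx Δy J K 2 W - normP Δx Δy J K 2 V) / (2 * τ) +
      ε * normP Δx Δy J K 4 (fun j k => (W j k + V j k) / 2) = 0 := by
  set u : ℕ → ℕ → ℂ := fun j k => (W j k + V j k) / 2 with hu_def
  have hu : memX J K u := by
    refine ⟨fun k => ?_, fun k => ?_, fun j => ?_, fun j => ?_⟩ <;>
      simp [hu_def, hW.1, hW.2.1, hW.2.2.1, hW.2.2.2, hV.1, hV.2.1, hV.2.2.1, hV.2.2.2]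
  have key : ∀ j ∈ range J, ∀ k ∈ range K,
      (‖W j k‖ ^ 2 - ‖V j k‖ ^ 2) / (2 * τ)
        + ε * ‖u j k‖ ^ 4 + (delta2 Δx Δy u j k * conj (u j k)).im = 0 := by
    intro j hj k hk
    rw [Finset.mem_range] at hj hk
    rcases Nat.eq_zero_or_pos j with hj0 | hj1
    · subst hj0
      simp [hu_def, hW.1, hV.1]
    rcases Nat.eq_zero_or_pos k with hk0 | hk1
    · subst hk0
      simp [hu_def, hW.2.2.1, hV.2.2.1]
    have h := hstep j k hj1 (by omega) hk1 (by omega)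
    have huv : u j k = (W j k + V j k) / 2 := rfl
    rw [huv]
    exact point_im' lam ν ε τ (W j k) (V j k) (delta2 Δx Δy u j k) h
  have hpt : ∑ j ∈ range J, ∑ k ∈ range K,
      ((‖W j k‖ ^ 2 - ‖V j k‖ ^ 2) / (2 * τ)
        + ε * ‖u j k‖ ^ 4 + (delta2 Δx Δy u j k * conj (u j k)).im) = 0 :=
    Finset.sum_eq_zero fun j hj => Finset.sum_eq_zero fun k hk => key j hj k hk
  simp only [Finset.sum_add_distrib, ← Finset.sum_div, Finset.sum_sub_distrib,
    ← Finset.mul_sum, ← Complex.im_sum] at hpt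
  rw [lap_sum_real Δx Δy J K (by omega) (by omega) u hu, add_zero] at hpt
  unfold normP
  linear_combination (Δx * Δy) * hpt

/-- exact discrete mass balance identity. -/
theorem stmt4 (J K : ℕ) (hJ : 2 ≤ J) (hK : 2 ≤ K) (a b c d : ℝ) (hab : a < b) (hcd : c < d)
    (Δx Δy : ℝ) (hΔx : Δx = (b - a) / J) (hΔy : Δy = (d - c) / K)
    (lam ν ε τ : ℝ) (hν : 0 < ν) (hε : 0 ≤ ε) (hτ : 0 < τ)
    (N : ℕ) (U : ℕ → ℕ → ℕ → ℂ) (hU : isCNFD Δx Δy J K lam ν ε τ N U)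
    (m : ℕ) (hm : 1 ≤ m) (hm' : m ≤ N) :
    (normP Δx Δy J K 2 (U m) - normP Δx Δy J K 2 (U 0)) / (2 * τ) +
      ε * ∑ n ∈ Finset.range m,
        normP Δx Δy J K 4 (fun j k => (U (n + 1) j k + U n j k) / 2) = 0 := by
  clear hm
  induction m with
  | zero => simp
  | succ p ih =>
    have hp : p ≤ N := by omega
    have hih := ih hp
    have hstep := step_mass Δx Δy J K hJ hK lam ν ε τ (U (p + 1)) (U p)
      (hU.1 (p + 1) hm') (hU.1 p hp) (hU.2 p (by omega))
    rw [Finset.sum_range_succ]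
    linear_combination hih + hstep
end
end

section
/- Let {Uⁿ}_{n=0}^N be a CNFD solution and 0 ≤ n ≤ N−1. Then Im(⟨U^{n+1}, Uⁿ·|U^{n+1/2}|²⟩_h) ≤ (τλ/2)·ΔxΔy Σ_{j=1}^{J−1} Σ_{k=1}^{K−1} (|U^{n+1}_{j,k}|² + |Uⁿ_{j,k}|²)|U^{n+1/2}_{j,k}|⁴ − (τν/3)·ΔxΔy Σ_{j=1}^{J−1} Σ_{k=1}^{K−1} (|U^{n+1}_{j,k}|⁴ + |U^{n+1}_{j,k}|²|Uⁿ_{j,k}|² + |Uⁿ_{j,k}|⁴)|U^{n+1/2}_{j,k}|⁴, where ⟨U^{n+1}, Uⁿ·|U^{n+1/2}|²⟩_h = ΔxΔy Σ_{j=1}^{J−1} Σ_{k=1}^{K−1} U^{n+1}_{j,k} · conj(Uⁿ_{j,k}) · |U^{n+1/2}_{j,k}|². -/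
noncomputable section

open Finset Complex ComplexConjugate

/-- Auxiliary: the key pointwise nonnegativity for summation by parts. -/
lemma re_pair_nonneg' (z w : ℂ) :
    0 ≤ ((z - w) * (conj z * ((‖z‖ ^ 2 : ℝ) : ℂ) - conj w * ((‖w‖ ^ 2 : ℝ) : ℂ))).re := by
  simp only [Complex.sq_norm, Complex.normSq_apply, Complex.mul_re, Complex.sub_re, Complex.sub_im,
    Complex.mul_im, Complex.conj_re, Complex.conj_im, Complex.ofReal_re, Complex.ofReal_im]
  nlinarith [sq_nonneg (z.re - w.re), sq_nonneg (z.im - w.im),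
    sq_nonneg (z.re^2 + z.im^2 - w.re^2 - w.im^2),
    mul_nonneg (add_nonneg (add_nonneg (sq_nonneg z.re) (sq_nonneg z.im)) (add_nonneg (sq_nonneg w.re) (sq_nonneg w.im)))
      (add_nonneg (sq_nonneg (z.re - w.re)) (sq_nonneg (z.im - w.im)))]

/-- Auxiliary: 1D summation by parts (Abel) identity. -/
lemma abel1' (f g : ℕ → ℂ) (J : ℕ) (h0 : g 0 = 0) (hJ : g J = 0) :
    ∑ j ∈ range J, (f (j + 1) - 2 * f j + f (j - 1)) * g j
      = -∑ j ∈ range J, (f (j + 1) - f j) * (g (j + 1) - g j) := by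
  have hshift : ∑ j ∈ range J, (f (j + 1) - f j) * g (j + 1)
      = ∑ j ∈ range J, (f j - f (j - 1)) * g j := by
    have h1 := Finset.sum_range_succ (fun j => (f j - f (j - 1)) * g j) J
    have h2 := Finset.sum_range_succ' (fun j => (f j - f (j - 1)) * g j) J
    simp only [Nat.add_sub_cancel] at h2
    rw [h1] at h2
    simp [h0, hJ] at h2
    exact h2.symm
  have expand : ∀ j ∈ range J, (f (j + 1) - 2 * f j + f (j - 1)) * g j
      = (f (j + 1) - f j) * g j - (f j - f (j - 1)) * g j := by
    intro j _; ring
  rw [Finset.sum_congr rfl expand, Finset.sum_sub_distrib, ← hshift, ← Finset.sum_sub_distrib,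
    ← Finset.sum_neg_distrib]
  exact Finset.sum_congr rfl fun j _ => by ring

/-- Auxiliary: 1D discrete Laplacian dissipativity. -/
lemma lap1d' (f : ℕ → ℂ) (J : ℕ) (h0 : f 0 = 0) (hJ : f J = 0) :
    ∑ j ∈ range J, ((f (j + 1) - 2 * f j + f (j - 1)) *
      (conj (f j) * ((‖f j‖ ^ 2 : ℝ) : ℂ))).re ≤ 0 := by
  set g : ℕ → ℂ := fun j => conj (f j) * ((‖f j‖ ^ 2 : ℝ) : ℂ) with hg
  have hg0 : g 0 = 0 := by simp [hg, h0]
  have hgJ : g J = 0 := by simp [hg, hJ]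
  have hre : ∑ j ∈ range J, ((f (j + 1) - 2 * f j + f (j - 1)) * g j).re
      = (∑ j ∈ range J, (f (j + 1) - 2 * f j + f (j - 1)) * g j).re := by
    rw [Complex.re_sum]
  rw [hre, abel1' f g J hg0 hgJ, Complex.neg_re, Complex.re_sum, neg_nonpos]
  apply Finset.sum_nonneg
  intro j _
  have := re_pair_nonneg' (f (j + 1)) (f j)
  simpa [hg] using this

/-- Auxiliary: sum over `Icc 1 (J-1)` equals sum over `range J` when the `0` term vanishes. -/
lemma sum_Icc_eq_range' {β : Type*} [AddCommMonoid β] (F : ℕ → β) (J : ℕ) (hJ : 1 ≤ J)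
    (h0 : F 0 = 0) : ∑ j ∈ Finset.Icc 1 (J - 1), F j = ∑ j ∈ range J, F j := by
  have hset : range J = insert 0 (Finset.Icc 1 (J - 1)) := by
    ext x
    simp only [Finset.mem_range, Finset.mem_insert, Finset.mem_Icc]
    omega
  rw [hset, Finset.sum_insert (by simp), h0, zero_add]

lemma abs4' (z : ℂ) : ‖z‖ ^ 4 = Complex.normSq z ^ 2 := by
  rw [show (4:ℕ) = 2*2 from rfl, pow_mul, Complex.sq_norm]

/-- Auxiliary: the pointwise identity extracted from the CNFD step equation. -/
lemma point' (τ lam ν ε : ℝ) (hτ : τ ≠ 0) (w v D : ℂ)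
    (hE : Complex.I * (w - v) / τ + D + lam * psi1 w v - ν * psi2 w v + Complex.I * ε * phi w v = 0) :
    (w * conj v * ((‖(w + v) / 2‖ ^ 2 : ℝ) : ℂ)).im
      = τ * (D * (conj ((w + v) / 2) * ((‖(w + v) / 2‖ ^ 2 : ℝ) : ℂ))).re
        + τ * lam / 2 * ((‖w‖ ^ 2 + ‖v‖ ^ 2) * ‖(w + v) / 2‖ ^ 4)
        - τ * ν / 3 * ((‖w‖ ^ 4 + ‖w‖ ^ 2 * ‖v‖ ^ 2 + ‖v‖ ^ 4)
            * ‖(w + v) / 2‖ ^ 4) := by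
  have hτc : (τ : ℂ) ≠ 0 := Complex.ofReal_ne_zero.mpr hτ
  have h3 : (τ:ℂ) * D * (conj ((w + v) / 2) * ((‖(w + v) / 2‖ ^ 2 : ℝ):ℂ))
      = -(Complex.I * (w - v) * (conj ((w + v) / 2) * ((‖(w + v) / 2‖ ^ 2 : ℝ):ℂ)))
        - (τ:ℂ) * lam * psi1 w v * (conj ((w + v) / 2) * ((‖(w + v) / 2‖ ^ 2 : ℝ):ℂ))
        + (τ:ℂ) * ν * psi2 w v * (conj ((w + v) / 2) * ((‖(w + v) / 2‖ ^ 2 : ℝ):ℂ))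
        - (τ:ℂ) * Complex.I * ε * phi w v * (conj ((w + v) / 2) * ((‖(w + v) / 2‖ ^ 2 : ℝ):ℂ)) := by
    have h2 : Complex.I * (w - v) + (τ:ℂ) * D + (τ:ℂ) * lam * psi1 w v
        - (τ:ℂ) * ν * psi2 w v + (τ:ℂ) * Complex.I * ε * phi w v = 0 := by
      field_simp at hE
      linear_combination hE
    linear_combination (conj ((w + v) / 2) * ((‖(w + v) / 2‖ ^ 2 : ℝ):ℂ)) * h2
  have h5 : τ * (D * (conj ((w + v) / 2) * ((‖(w + v) / 2‖ ^ 2 : ℝ):ℂ))).re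
      = ((τ:ℂ) * D * (conj ((w + v) / 2) * ((‖(w + v) / 2‖ ^ 2 : ℝ):ℂ))).re := by
    rw [mul_assoc, Complex.re_ofReal_mul]
  rw [h5, h3]
  simp only [psi1, psi2, phi, abs4', Complex.sq_norm, Complex.normSq_apply]
  simp only [Complex.mul_re, Complex.mul_im, Complex.add_re, Complex.add_im, Complex.sub_re,
    Complex.sub_im, Complex.neg_re, Complex.neg_im, Complex.div_re, Complex.div_im,
    Complex.I_re, Complex.I_im, Complex.ofReal_re, Complex.ofReal_im, Complex.conj_re,
    Complex.conj_im, Complex.normSq_apply, Complex.re_ofNat, Complex.im_ofNat]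
  ring

/-- Auxiliary: 2D discrete Laplacian dissipativity. -/
lemma lap2d' (J K : ℕ) (hJ : 1 ≤ J) (hK : 1 ≤ K) (M : ℕ → ℕ → ℂ)
    (h0 : ∀ k, M 0 k = 0) (hJ0 : ∀ k, M J k = 0) (hk0 : ∀ j, M j 0 = 0) (hK0 : ∀ j, M j K = 0)
    (Δx Δy : ℝ) (hΔx : 0 < Δx) (hΔy : 0 < Δy) :
    ∑ j ∈ Finset.Icc 1 (J - 1), ∑ k ∈ Finset.Icc 1 (K - 1),
      (delta2 Δx Δy M j k * (conj (M j k) * ((‖M j k‖ ^ 2 : ℝ):ℂ))).re ≤ 0 := by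
  have hsplit : ∀ j k, (delta2 Δx Δy M j k * (conj (M j k) * ((‖M j k‖ ^ 2 : ℝ):ℂ))).re
      = ((M (j+1) k - 2 * M j k + M (j-1) k) * (conj (M j k) * ((‖M j k‖ ^ 2 : ℝ):ℂ))).re / (Δx^2)
        + ((M j (k+1) - 2 * M j k + M j (k-1)) * (conj (M j k) * ((‖M j k‖ ^ 2 : ℝ):ℂ))).re / (Δy^2) := by
    intro j k
    have h1 : delta2 Δx Δy M j k * (conj (M j k) * ((‖M j k‖ ^ 2 : ℝ):ℂ))
        = (M (j+1) k - 2 * M j k + M (j-1) k) * (conj (M j k) * ((‖M j k‖ ^ 2 : ℝ):ℂ)) / ((Δx^2 : ℝ):ℂ)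
          + (M j (k+1) - 2 * M j k + M j (k-1)) * (conj (M j k) * ((‖M j k‖ ^ 2 : ℝ):ℂ)) / ((Δy^2 : ℝ):ℂ) := by
      unfold delta2
      have hx : ((Δx:ℂ))^2 ≠ 0 := pow_ne_zero _ (Complex.ofReal_ne_zero.mpr hΔx.ne')
      have hy : ((Δy:ℂ))^2 ≠ 0 := pow_ne_zero _ (Complex.ofReal_ne_zero.mpr hΔy.ne')
      push_cast
      ring
    rw [h1, Complex.add_re, Complex.div_ofReal_re, Complex.div_ofReal_re]
  calc ∑ j ∈ Finset.Icc 1 (J - 1), ∑ k ∈ Finset.Icc 1 (K - 1),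
        (delta2 Δx Δy M j k * (conj (M j k) * ((‖M j k‖ ^ 2 : ℝ):ℂ))).re
      = (∑ j ∈ Finset.Icc 1 (J - 1), ∑ k ∈ Finset.Icc 1 (K - 1),
          ((M (j+1) k - 2 * M j k + M (j-1) k) * (conj (M j k) * ((‖M j k‖ ^ 2 : ℝ):ℂ))).re) / (Δx^2)
        + (∑ j ∈ Finset.Icc 1 (J - 1), ∑ k ∈ Finset.Icc 1 (K - 1),
          ((M j (k+1) - 2 * M j k + M j (k-1)) * (conj (M j k) * ((‖M j k‖ ^ 2 : ℝ):ℂ))).re) / (Δy^2) := by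
        simp only [hsplit, Finset.sum_add_distrib, Finset.sum_div]
    _ ≤ 0 := by
        have hx : ∑ j ∈ Finset.Icc 1 (J - 1), ∑ k ∈ Finset.Icc 1 (K - 1),
            ((M (j+1) k - 2 * M j k + M (j-1) k) * (conj (M j k) * ((‖M j k‖ ^ 2 : ℝ):ℂ))).re ≤ 0 := by
          rw [Finset.sum_comm]
          apply Finset.sum_nonpos
          intro k _
          rw [sum_Icc_eq_range' _ J hJ (by simp [h0 k])]
          exact lap1d' (fun j => M j k) J (h0 k) (hJ0 k)
        have hy : ∑ j ∈ Finset.Icc 1 (J - 1), ∑ k ∈ Finset.Icc 1 (K - 1),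
            ((M j (k+1) - 2 * M j k + M j (k-1)) * (conj (M j k) * ((‖M j k‖ ^ 2 : ℝ):ℂ))).re ≤ 0 := by
          apply Finset.sum_nonpos
          intro j _
          rw [sum_Icc_eq_range' _ K hK (by simp [hk0 j])]
          exact lap1d' (fun k => M j k) K (hk0 j) (hK0 j)
        have h1 : (0:ℝ) < Δx^2 := by positivity
        have h2 : (0:ℝ) < Δy^2 := by positivity
        have := div_nonpos_of_nonpos_of_nonneg hx h1.le
        have := div_nonpos_of_nonpos_of_nonneg hy h2.le
        linarith

/-- the key imaginary-part estimate for the cubic damping term. -/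
theorem stmt7 (J K : ℕ) (hJ : 2 ≤ J) (hK : 2 ≤ K) (a b c d : ℝ) (hab : a < b) (hcd : c < d)
    (Δx Δy : ℝ) (hΔx : Δx = (b - a) / J) (hΔy : Δy = (d - c) / K)
    (lam ν ε τ : ℝ) (hν : 0 < ν) (hε : 0 ≤ ε) (hτ : 0 < τ)
    (N : ℕ) (U : ℕ → ℕ → ℕ → ℂ) (hU : isCNFD Δx Δy J K lam ν ε τ N U)
    (n : ℕ) (hn : n < N) :
    (((Δx * Δy : ℝ) : ℂ) * ∑ j ∈ Finset.Icc 1 (J - 1), ∑ k ∈ Finset.Icc 1 (K - 1),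
        U (n + 1) j k * conj (U n j k) *
          ((‖(U (n + 1) j k + U n j k) / 2‖ ^ 2 : ℝ) : ℂ)).im ≤
      τ * lam / 2 * (Δx * Δy * ∑ j ∈ Finset.Icc 1 (J - 1), ∑ k ∈ Finset.Icc 1 (K - 1),
          (‖U (n + 1) j k‖ ^ 2 + ‖U n j k‖ ^ 2) *
            ‖(U (n + 1) j k + U n j k) / 2‖ ^ 4) -
      τ * ν / 3 * (Δx * Δy * ∑ j ∈ Finset.Icc 1 (J - 1), ∑ k ∈ Finset.Icc 1 (K - 1),
          (‖U (n + 1) j k‖ ^ 4 +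
            ‖U (n + 1) j k‖ ^ 2 * ‖U n j k‖ ^ 2 +
            ‖U n j k‖ ^ 4) *
            ‖(U (n + 1) j k + U n j k) / 2‖ ^ 4) := by
  obtain ⟨hXmem, hstep⟩ := hU
  obtain ⟨hW0, hWJ, hWk0, hWK⟩ := hXmem (n + 1) hn
  obtain ⟨hV0, hVJ, hVk0, hVK⟩ := hXmem n hn.le
  have hE := hstep n hn
  have hJpos : (0:ℝ) < (J:ℝ) := by exact_mod_cast Nat.lt_of_lt_of_le Nat.zero_lt_two hJ
  have hKpos : (0:ℝ) < (K:ℝ) := by exact_mod_cast Nat.lt_of_lt_of_le Nat.zero_lt_two hK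
  have hΔx0 : 0 < Δx := by rw [hΔx]; exact div_pos (by linarith) hJpos
  have hΔy0 : 0 < Δy := by rw [hΔy]; exact div_pos (by linarith) hKpos
  have hτ' : τ ≠ 0 := hτ.ne'
  have hpt : ∀ j ∈ Finset.Icc 1 (J - 1), ∀ k ∈ Finset.Icc 1 (K - 1),
      (U (n + 1) j k * conj (U n j k) *
          ((‖(U (n + 1) j k + U n j k) / 2‖ ^ 2 : ℝ) : ℂ)).im
        = τ * (delta2 Δx Δy (fun j' k' => (U (n + 1) j' k' + U n j' k') / 2) j k *
              (conj ((U (n + 1) j k + U n j k) / 2) *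
                ((‖(U (n + 1) j k + U n j k) / 2‖ ^ 2 : ℝ) : ℂ))).re
          + τ * lam / 2 * ((‖U (n + 1) j k‖ ^ 2 + ‖U n j k‖ ^ 2) *
              ‖(U (n + 1) j k + U n j k) / 2‖ ^ 4)
          - τ * ν / 3 * ((‖U (n + 1) j k‖ ^ 4 +
              ‖U (n + 1) j k‖ ^ 2 * ‖U n j k‖ ^ 2 +
              ‖U n j k‖ ^ 4) *
              ‖(U (n + 1) j k + U n j k) / 2‖ ^ 4) := by
    intro j hj k hk
    simp only [Finset.mem_Icc] at hj hk
    exact point' τ lam ν ε hτ' _ _ _ (hE j k hj.1 hj.2 hk.1 hk.2)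
  have hLap : ∑ j ∈ Finset.Icc 1 (J - 1), ∑ k ∈ Finset.Icc 1 (K - 1),
      (delta2 Δx Δy (fun j' k' => (U (n + 1) j' k' + U n j' k') / 2) j k *
        (conj ((U (n + 1) j k + U n j k) / 2) *
          ((‖(U (n + 1) j k + U n j k) / 2‖ ^ 2 : ℝ) : ℂ))).re ≤ 0 := by
    exact lap2d' J K (le_trans one_le_two hJ) (le_trans one_le_two hK)
      (fun j' k' => (U (n + 1) j' k' + U n j' k') / 2)
      (fun k => by simp [hW0 k, hV0 k]) (fun k => by simp [hWJ k, hVJ k])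
      (fun j => by simp [hWk0 j, hVk0 j]) (fun j => by simp [hWK j, hVK j])
      Δx Δy hΔx0 hΔy0
  rw [Complex.im_ofReal_mul]
  simp only [Complex.im_sum]
  rw [Finset.sum_congr rfl fun j hj => Finset.sum_congr rfl fun k hk => hpt j hj k hk]
  have hsplit : ∑ j ∈ Finset.Icc 1 (J - 1), ∑ k ∈ Finset.Icc 1 (K - 1),
      (τ * (delta2 Δx Δy (fun j' k' => (U (n + 1) j' k' + U n j' k') / 2) j k *
              (conj ((U (n + 1) j k + U n j k) / 2) *
                ((‖(U (n + 1) j k + U n j k) / 2‖ ^ 2 : ℝ) : ℂ))).re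
          + τ * lam / 2 * ((‖U (n + 1) j k‖ ^ 2 + ‖U n j k‖ ^ 2) *
              ‖(U (n + 1) j k + U n j k) / 2‖ ^ 4)
          - τ * ν / 3 * ((‖U (n + 1) j k‖ ^ 4 +
              ‖U (n + 1) j k‖ ^ 2 * ‖U n j k‖ ^ 2 +
              ‖U n j k‖ ^ 4) *
              ‖(U (n + 1) j k + U n j k) / 2‖ ^ 4))
      = τ * (∑ j ∈ Finset.Icc 1 (J - 1), ∑ k ∈ Finset.Icc 1 (K - 1),
          (delta2 Δx Δy (fun j' k' => (U (n + 1) j' k' + U n j' k') / 2) j k *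
              (conj ((U (n + 1) j k + U n j k) / 2) *
                ((‖(U (n + 1) j k + U n j k) / 2‖ ^ 2 : ℝ) : ℂ))).re)
        + τ * lam / 2 * (∑ j ∈ Finset.Icc 1 (J - 1), ∑ k ∈ Finset.Icc 1 (K - 1),
            (‖U (n + 1) j k‖ ^ 2 + ‖U n j k‖ ^ 2) *
              ‖(U (n + 1) j k + U n j k) / 2‖ ^ 4)
        - τ * ν / 3 * (∑ j ∈ Finset.Icc 1 (J - 1), ∑ k ∈ Finset.Icc 1 (K - 1),
            (‖U (n + 1) j k‖ ^ 4 +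
              ‖U (n + 1) j k‖ ^ 2 * ‖U n j k‖ ^ 2 +
              ‖U n j k‖ ^ 4) *
              ‖(U (n + 1) j k + U n j k) / 2‖ ^ 4) := by
    simp only [Finset.sum_sub_distrib, Finset.sum_add_distrib, ← Finset.mul_sum]
  rw [hsplit]
  have hcross : Δx * Δy * (τ * (∑ j ∈ Finset.Icc 1 (J - 1), ∑ k ∈ Finset.Icc 1 (K - 1),
      (delta2 Δx Δy (fun j' k' => (U (n + 1) j' k' + U n j' k') / 2) j k *
        (conj ((U (n + 1) j k + U n j k) / 2) *
          ((‖(U (n + 1) j k + U n j k) / 2‖ ^ 2 : ℝ) : ℂ))).re)) ≤ 0 :=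
    mul_nonpos_of_nonneg_of_nonpos (by positivity)
      (mul_nonpos_of_nonneg_of_nonpos hτ.le hLap)
  nlinarith [hcross]
end
end

section
/- Let {Uⁿ}_{n=0}^N be a CNFD solution and 0 ≤ n ≤ N−1. Then the discrete energy satisfies the exact identity E_h(U^{n+1}) − E_h(Uⁿ) = 2ε · Im(⟨U^{n+1}, Uⁿ·|U^{n+1/2}|²⟩_h), where ⟨U^{n+1}, Uⁿ·|U^{n+1/2}|²⟩_h = ΔxΔy Σ_{j=1}^{J−1} Σ_{k=1}^{K−1} U^{n+1}_{j,k} · conj(Uⁿ_{j,k}) · |U^{n+1/2}_{j,k}|². -/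
noncomputable section

open Finset Complex ComplexConjugate

private lemma sbp_aux (u w : ℕ → ℂ) (m : ℕ) :
    ∑ j ∈ Finset.Ico 1 (m+1), (u (j+1) - 2*u j + u (j-1)) * w j
      = (u (m+1) - u m) * w (m+1) - (u 1 - u 0) * w 0
        - ∑ j ∈ Finset.range (m+1), (u (j+1) - u j) * (w (j+1) - w j) := by
  induction m with
  | zero => simp [Finset.sum_range_one]; ring
  | succ m ih =>
    rw [Finset.sum_Ico_succ_top (by omega), Finset.sum_range_succ, ih]
    simp only [Nat.add_sub_cancel]
    ring

private lemma sbp (u w : ℕ → ℂ) (m : ℕ) (h0 : w 0 = 0) (hm : w (m+1) = 0) :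
    ∑ j ∈ Finset.Icc 1 m, (u (j+1) - 2*u j + u (j-1)) * w j
      = -∑ j ∈ Finset.range (m+1), (u (j+1) - u j) * (w (j+1) - w j) := by
  rw [← Finset.Ico_add_one_right_eq_Icc, sbp_aux, h0, hm]
  ring

private lemma range_eq_insert (J : ℕ) (hJ : 1 ≤ J) :
    Finset.range J = insert 0 (Finset.Icc 1 (J-1)) := by
  ext x; simp only [Finset.mem_range, Finset.mem_insert, Finset.mem_Icc]; omega

private lemma sum_range_eq_interior {α : Type*} [AddCommMonoid α] (J : ℕ) (hJ : 1 ≤ J)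
    (f : ℕ → α) (h0 : f 0 = 0) :
    ∑ j ∈ Finset.range J, f j = ∑ j ∈ Finset.Icc 1 (J-1), f j := by
  rw [range_eq_insert J hJ, Finset.sum_insert (by simp), h0, zero_add]

private lemma sum2_range_eq_interior {α : Type*} [AddCommMonoid α] (J K : ℕ)
    (hJ : 1 ≤ J) (hK : 1 ≤ K) (f : ℕ → ℕ → α)
    (h1 : ∀ k, f 0 k = 0) (h2 : ∀ j, f j 0 = 0) :
    ∑ j ∈ Finset.range J, ∑ k ∈ Finset.range K, f j k
      = ∑ j ∈ Finset.Icc 1 (J-1), ∑ k ∈ Finset.Icc 1 (K-1), f j k := by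
  rw [sum_range_eq_interior J hJ _ (by simp [h1])]
  exact Finset.sum_congr rfl fun j _ => sum_range_eq_interior K hK _ (h2 j)

private lemma re_L1 (z : ℂ) (t : ℝ) : (Complex.I * z / (t:ℂ) * conj z).re = 0 := by
  have h : Complex.I * z / (t:ℂ) * conj z = Complex.I * (z * conj z) / (t:ℂ) := by ring
  rw [h, Complex.mul_conj]
  simp [Complex.div_re, Complex.mul_re, Complex.normSq_apply]

private lemma re_L2 (p q : ℂ) :
    (((p + q)/2) * conj (p - q)).re = (‖p‖ ^ 2 - ‖q‖ ^ 2) / 2 := by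
  rw [Complex.sq_norm, Complex.sq_norm]
  simp [Complex.div_re, Complex.mul_re, Complex.mul_im, Complex.add_re, Complex.add_im,
    Complex.sub_re, Complex.sub_im, Complex.normSq_apply]
  ring

private lemma re_L3 (z w : ℂ) (l : ℝ) :
    ((l:ℂ) * psi1 z w * conj (z - w)).re
      = l * (‖z‖ ^ 4 - ‖w‖ ^ 4) / 4 := by
  have h : (l:ℂ) * psi1 z w * conj (z - w)
      = ((l * ((‖z‖ ^ 2 + ‖w‖ ^ 2) / 2) : ℝ) : ℂ)
        * (((z + w)/2) * conj (z - w)) := by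
    unfold psi1; push_cast; ring
  rw [h, Complex.re_ofReal_mul, re_L2]
  rw [show ‖z‖ ^ 4 = (‖z‖ ^ 2)^2 by ring,
      show ‖w‖ ^ 4 = (‖w‖ ^ 2)^2 by ring]
  ring

private lemma re_L4 (z w : ℂ) (v : ℝ) :
    ((v:ℂ) * psi2 z w * conj (z - w)).re
      = v * (‖z‖ ^ 6 - ‖w‖ ^ 6) / 6 := by
  have h : (v:ℂ) * psi2 z w * conj (z - w)
      = ((v * ((‖z‖ ^ 4 + ‖z‖ ^ 2 * ‖w‖ ^ 2 + ‖w‖ ^ 4) / 3) : ℝ) : ℂ)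
        * (((z + w)/2) * conj (z - w)) := by
    unfold psi2; push_cast; ring
  rw [h, Complex.re_ofReal_mul, re_L2]
  rw [show ‖z‖ ^ 6 = (‖z‖ ^ 2)^3 by ring,
      show ‖w‖ ^ 6 = (‖w‖ ^ 2)^3 by ring,
      show ‖z‖ ^ 4 = (‖z‖ ^ 2)^2 by ring,
      show ‖w‖ ^ 4 = (‖w‖ ^ 2)^2 by ring]
  ring

private lemma re_L5 (z w : ℂ) (e : ℝ) :
    (Complex.I * (e:ℂ) * phi z w * conj (z - w)).re
      = e * (z * conj w * ((‖(z + w)/2‖ ^ 2 : ℝ) : ℂ)).im := by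
  unfold phi
  set m : ℝ := ‖(z + w)/2‖ ^ 2 with hm
  simp [Complex.mul_re, Complex.mul_im, Complex.add_re, Complex.add_im,
    Complex.sub_re, Complex.sub_im, Complex.div_re, Complex.div_im, Complex.normSq_apply]
  ring

/-- exact discrete energy balance identity. -/
theorem stmt8 (J K : ℕ) (hJ : 2 ≤ J) (hK : 2 ≤ K) (a b c d : ℝ) (hab : a < b) (hcd : c < d)
    (Δx Δy : ℝ) (hΔx : Δx = (b - a) / J) (hΔy : Δy = (d - c) / K)
    (lam ν ε τ : ℝ) (hν : 0 < ν) (hε : 0 ≤ ε) (hτ : 0 < τ)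
    (N : ℕ) (U : ℕ → ℕ → ℕ → ℂ) (hU : isCNFD Δx Δy J K lam ν ε τ N U)
    (n : ℕ) (hn : n < N) :
    energy Δx Δy J K lam ν (U (n + 1)) - energy Δx Δy J K lam ν (U n) =
      2 * ε * (((Δx * Δy : ℝ) : ℂ) * ∑ j ∈ Finset.Icc 1 (J - 1), ∑ k ∈ Finset.Icc 1 (K - 1),
          U (n + 1) j k * conj (U n j k) *
            ((‖(U (n + 1) j k + U n j k) / 2‖ ^ 2 : ℝ) : ℂ)).im := by
  obtain ⟨hmem, hstep⟩ := hU
  set W : ℕ → ℕ → ℂ := U (n+1) with hWdef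
  set V : ℕ → ℕ → ℂ := U n with hVdef
  obtain ⟨hW0a, hWJa, hW0'a, hWKa⟩ := hmem (n+1) hn
  obtain ⟨hV0a, hVJa, hV0'a, hVKa⟩ := hmem n hn.le
  have hW0 : ∀ k, W 0 k = 0 := hW0a
  have hWJ : ∀ k, W J k = 0 := hWJa
  have hW0' : ∀ j, W j 0 = 0 := hW0'a
  have hWK : ∀ j, W j K = 0 := hWKa
  have hV0 : ∀ k, V 0 k = 0 := hV0a
  have hVJ : ∀ k, V J k = 0 := hVJa
  have hV0' : ∀ j, V j 0 = 0 := hV0'a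
  have hVK : ∀ j, V j K = 0 := hVKa
  have heq := hstep n hn
  have hΔxpos : 0 < Δx := by
    rw [hΔx]; apply div_pos (sub_pos.mpr hab); exact_mod_cast (by omega : 0 < J)
  have hΔypos : 0 < Δy := by
    rw [hΔy]; apply div_pos (sub_pos.mpr hcd); exact_mod_cast (by omega : 0 < K)
  have hΔxne : Δx ≠ 0 := ne_of_gt hΔxpos
  have hΔyne : Δy ≠ 0 := ne_of_gt hΔypos
  have hJ1 : J - 1 + 1 = J := by omega
  have hK1 : K - 1 + 1 = K := by omega
  -- master identity
  have h0 : ∑ j ∈ Finset.Icc 1 (J-1), ∑ k ∈ Finset.Icc 1 (K-1),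
      ((Complex.I * (W j k - V j k) / (τ : ℂ) +
        delta2 Δx Δy (fun j' k' => (W j' k' + V j' k') / 2) j k +
        (lam : ℂ) * psi1 (W j k) (V j k) - (ν : ℂ) * psi2 (W j k) (V j k) +
        Complex.I * (ε : ℂ) * phi (W j k) (V j k)) * conj (W j k - V j k)) = 0 := by
    apply Finset.sum_eq_zero; intro j hj
    apply Finset.sum_eq_zero; intro k hk
    rw [Finset.mem_Icc] at hj hk
    rw [heq j k hj.1 hj.2 hk.1 hk.2, zero_mul]
  have hkey :
      (∑ j ∈ Finset.Icc 1 (J-1), ∑ k ∈ Finset.Icc 1 (K-1),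
        Complex.I * (W j k - V j k) / (τ:ℂ) * conj (W j k - V j k))
      + (∑ j ∈ Finset.Icc 1 (J-1), ∑ k ∈ Finset.Icc 1 (K-1),
        delta2 Δx Δy (fun j' k' => (W j' k' + V j' k')/2) j k * conj (W j k - V j k))
      + (∑ j ∈ Finset.Icc 1 (J-1), ∑ k ∈ Finset.Icc 1 (K-1),
        (lam:ℂ) * psi1 (W j k) (V j k) * conj (W j k - V j k))
      - (∑ j ∈ Finset.Icc 1 (J-1), ∑ k ∈ Finset.Icc 1 (K-1),
        (ν:ℂ) * psi2 (W j k) (V j k) * conj (W j k - V j k))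
      + (∑ j ∈ Finset.Icc 1 (J-1), ∑ k ∈ Finset.Icc 1 (K-1),
        Complex.I * (ε:ℂ) * phi (W j k) (V j k) * conj (W j k - V j k)) = 0 := by
    rw [← h0]
    simp only [← Finset.sum_add_distrib, ← Finset.sum_sub_distrib]
    exact Finset.sum_congr rfl fun j _ => Finset.sum_congr rfl fun k _ => by ring

  have hre := congrArg Complex.re hkey
  simp only [Complex.add_re, Complex.sub_re, Complex.zero_re] at hre
  -- term 1
  have hre1 : (∑ j ∈ Finset.Icc 1 (J-1), ∑ k ∈ Finset.Icc 1 (K-1),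
      Complex.I * (W j k - V j k) / (τ:ℂ) * conj (W j k - V j k)).re = 0 := by
    rw [Complex.re_sum]
    refine Finset.sum_eq_zero fun j _ => ?_
    rw [Complex.re_sum]
    exact Finset.sum_eq_zero fun k _ => re_L1 _ _
  -- term 3
  have hre3 : (∑ j ∈ Finset.Icc 1 (J-1), ∑ k ∈ Finset.Icc 1 (K-1),
      (lam:ℂ) * psi1 (W j k) (V j k) * conj (W j k - V j k)).re
      = lam * ((∑ j ∈ range J, ∑ k ∈ range K, ‖W j k‖ ^ 4)
          - ∑ j ∈ range J, ∑ k ∈ range K, ‖V j k‖ ^ 4) / 4 := by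
    rw [Complex.re_sum]
    simp only [Complex.re_sum]
    calc ∑ j ∈ Finset.Icc 1 (J-1), ∑ k ∈ Finset.Icc 1 (K-1),
          ((lam:ℂ) * psi1 (W j k) (V j k) * conj (W j k - V j k)).re
        = ∑ j ∈ Finset.Icc 1 (J-1), ∑ k ∈ Finset.Icc 1 (K-1),
            lam * (‖W j k‖ ^ 4 - ‖V j k‖ ^ 4) / 4 :=
          Finset.sum_congr rfl fun j _ => Finset.sum_congr rfl fun k _ => re_L3 _ _ _
      _ = ∑ j ∈ range J, ∑ k ∈ range K,
            lam * (‖W j k‖ ^ 4 - ‖V j k‖ ^ 4) / 4 :=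
          (sum2_range_eq_interior J K (by omega) (by omega) _
            (fun k => by simp [hW0 k, hV0 k]) (fun j => by simp [hW0' j, hV0' j])).symm
      _ = _ := by
          simp only [mul_div_assoc, ← Finset.mul_sum, ← Finset.sum_div, Finset.sum_sub_distrib]
  -- term 4
  have hre4 : (∑ j ∈ Finset.Icc 1 (J-1), ∑ k ∈ Finset.Icc 1 (K-1),
      (ν:ℂ) * psi2 (W j k) (V j k) * conj (W j k - V j k)).re
      = ν * ((∑ j ∈ range J, ∑ k ∈ range K, ‖W j k‖ ^ 6)
          - ∑ j ∈ range J, ∑ k ∈ range K, ‖V j k‖ ^ 6) / 6 := by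
    rw [Complex.re_sum]
    simp only [Complex.re_sum]
    calc ∑ j ∈ Finset.Icc 1 (J-1), ∑ k ∈ Finset.Icc 1 (K-1),
          ((ν:ℂ) * psi2 (W j k) (V j k) * conj (W j k - V j k)).re
        = ∑ j ∈ Finset.Icc 1 (J-1), ∑ k ∈ Finset.Icc 1 (K-1),
            ν * (‖W j k‖ ^ 6 - ‖V j k‖ ^ 6) / 6 :=
          Finset.sum_congr rfl fun j _ => Finset.sum_congr rfl fun k _ => re_L4 _ _ _
      _ = ∑ j ∈ range J, ∑ k ∈ range K,
            ν * (‖W j k‖ ^ 6 - ‖V j k‖ ^ 6) / 6 :=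
          (sum2_range_eq_interior J K (by omega) (by omega) _
            (fun k => by simp [hW0 k, hV0 k]) (fun j => by simp [hW0' j, hV0' j])).symm
      _ = _ := by
          simp only [mul_div_assoc, ← Finset.mul_sum, ← Finset.sum_div, Finset.sum_sub_distrib]
  -- term 5
  have hre5 : (∑ j ∈ Finset.Icc 1 (J-1), ∑ k ∈ Finset.Icc 1 (K-1),
      Complex.I * (ε:ℂ) * phi (W j k) (V j k) * conj (W j k - V j k)).re
      = ε * ∑ j ∈ Finset.Icc 1 (J-1), ∑ k ∈ Finset.Icc 1 (K-1),
          (W j k * conj (V j k) * ((‖(W j k + V j k) / 2‖ ^ 2 : ℝ) : ℂ)).im := by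
    rw [Complex.re_sum]
    simp only [Complex.re_sum]
    calc ∑ j ∈ Finset.Icc 1 (J-1), ∑ k ∈ Finset.Icc 1 (K-1),
          (Complex.I * (ε:ℂ) * phi (W j k) (V j k) * conj (W j k - V j k)).re
        = ∑ j ∈ Finset.Icc 1 (J-1), ∑ k ∈ Finset.Icc 1 (K-1),
            ε * (W j k * conj (V j k) * ((‖(W j k + V j k) / 2‖ ^ 2 : ℝ) : ℂ)).im :=
          Finset.sum_congr rfl fun j _ => Finset.sum_congr rfl fun k _ => re_L5 _ _ _
      _ = _ := by simp only [← Finset.mul_sum]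
  -- term 2 : summation by parts
  have hxk : ∀ k : ℕ,
      ∑ j ∈ Finset.Icc 1 (J-1),
        ((W (j+1) k + V (j+1) k)/2 - 2*((W j k + V j k)/2) + (W (j-1) k + V (j-1) k)/2)
          * conj (W j k - V j k)
      = -∑ j ∈ Finset.range J,
          ((W (j+1) k + V (j+1) k)/2 - (W j k + V j k)/2)
            * (conj (W (j+1) k - V (j+1) k) - conj (W j k - V j k)) := by
    intro k
    have h := sbp (fun j => (W j k + V j k)/2) (fun j => conj (W j k - V j k)) (J-1)
      (by simp [hW0 k, hV0 k]) (by rw [hJ1]; simp [hWJ k, hVJ k])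
    rw [hJ1] at h
    exact h
  have hyk : ∀ j : ℕ,
      ∑ k ∈ Finset.Icc 1 (K-1),
        ((W j (k+1) + V j (k+1))/2 - 2*((W j k + V j k)/2) + (W j (k-1) + V j (k-1))/2)
          * conj (W j k - V j k)
      = -∑ k ∈ Finset.range K,
          ((W j (k+1) + V j (k+1))/2 - (W j k + V j k)/2)
            * (conj (W j (k+1) - V j (k+1)) - conj (W j k - V j k)) := by
    intro j
    have h := sbp (fun k => (W j k + V j k)/2) (fun k => conj (W j k - V j k)) (K-1)
      (by simp [hW0' j, hV0' j]) (by rw [hK1]; simp [hWK j, hVK j])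
    rw [hK1] at h
    exact h
  have hSx : ∑ j ∈ Finset.Icc 1 (J-1), ∑ k ∈ Finset.Icc 1 (K-1),
        ((W (j+1) k + V (j+1) k)/2 - 2*((W j k + V j k)/2) + (W (j-1) k + V (j-1) k)/2)
          / (Δx:ℂ)^2 * conj (W j k - V j k)
      = (((Δx:ℂ)^2)⁻¹) * -∑ j ∈ Finset.range J, ∑ k ∈ Finset.range K,
          ((W (j+1) k + V (j+1) k)/2 - (W j k + V j k)/2)
            * (conj (W (j+1) k - V (j+1) k) - conj (W j k - V j k)) := by
    rw [Finset.sum_comm]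
    have e1 : ∀ k ∈ Finset.Icc 1 (K-1),
        ∑ j ∈ Finset.Icc 1 (J-1),
          ((W (j+1) k + V (j+1) k)/2 - 2*((W j k + V j k)/2) + (W (j-1) k + V (j-1) k)/2)
            / (Δx:ℂ)^2 * conj (W j k - V j k)
        = (((Δx:ℂ)^2)⁻¹) * -∑ j ∈ Finset.range J,
            ((W (j+1) k + V (j+1) k)/2 - (W j k + V j k)/2)
              * (conj (W (j+1) k - V (j+1) k) - conj (W j k - V j k)) := by
      intro k _
      rw [← hxk k, Finset.mul_sum]
      exact Finset.sum_congr rfl fun j _ => by ring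
    rw [Finset.sum_congr rfl e1, ← Finset.mul_sum]
    congr 1
    rw [Finset.sum_neg_distrib]
    congr 1
    rw [Finset.sum_comm]
    refine Finset.sum_congr rfl fun j _ => ?_
    exact (sum_range_eq_interior K (by omega) _ (by simp [hW0', hV0'])).symm
  have hSy : ∑ j ∈ Finset.Icc 1 (J-1), ∑ k ∈ Finset.Icc 1 (K-1),
        ((W j (k+1) + V j (k+1))/2 - 2*((W j k + V j k)/2) + (W j (k-1) + V j (k-1))/2)
          / (Δy:ℂ)^2 * conj (W j k - V j k)
      = (((Δy:ℂ)^2)⁻¹) * -∑ j ∈ Finset.range J, ∑ k ∈ Finset.range K,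
          ((W j (k+1) + V j (k+1))/2 - (W j k + V j k)/2)
            * (conj (W j (k+1) - V j (k+1)) - conj (W j k - V j k)) := by
    have e1 : ∀ j ∈ Finset.Icc 1 (J-1),
        ∑ k ∈ Finset.Icc 1 (K-1),
          ((W j (k+1) + V j (k+1))/2 - 2*((W j k + V j k)/2) + (W j (k-1) + V j (k-1))/2)
            / (Δy:ℂ)^2 * conj (W j k - V j k)
        = (((Δy:ℂ)^2)⁻¹) * -∑ k ∈ Finset.range K,
            ((W j (k+1) + V j (k+1))/2 - (W j k + V j k)/2)
              * (conj (W j (k+1) - V j (k+1)) - conj (W j k - V j k)) := by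
      intro j _
      rw [← hyk j, Finset.mul_sum]
      exact Finset.sum_congr rfl fun k _ => by ring
    rw [Finset.sum_congr rfl e1, ← Finset.mul_sum]
    congr 1
    rw [Finset.sum_neg_distrib]
    congr 1
    exact (sum_range_eq_interior J (by omega) _ (by simp [hW0, hV0])).symm
  have hsplit2 : ∑ j ∈ Finset.Icc 1 (J-1), ∑ k ∈ Finset.Icc 1 (K-1),
        delta2 Δx Δy (fun j' k' => (W j' k' + V j' k')/2) j k * conj (W j k - V j k)
      = (∑ j ∈ Finset.Icc 1 (J-1), ∑ k ∈ Finset.Icc 1 (K-1),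
          ((W (j+1) k + V (j+1) k)/2 - 2*((W j k + V j k)/2) + (W (j-1) k + V (j-1) k)/2)
            / (Δx:ℂ)^2 * conj (W j k - V j k))
        + ∑ j ∈ Finset.Icc 1 (J-1), ∑ k ∈ Finset.Icc 1 (K-1),
          ((W j (k+1) + V j (k+1))/2 - 2*((W j k + V j k)/2) + (W j (k-1) + V j (k-1))/2)
            / (Δy:ℂ)^2 * conj (W j k - V j k) := by
    simp only [← Finset.sum_add_distrib]
    refine Finset.sum_congr rfl fun j _ => Finset.sum_congr rfl fun k _ => ?_
    simp only [delta2]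
    ring
  have hptx : ∀ j k : ℕ,
      (((W (j+1) k + V (j+1) k)/2 - (W j k + V j k)/2)
        * (conj (W (j+1) k - V (j+1) k) - conj (W j k - V j k))).re
      = (‖W (j+1) k - W j k‖ ^ 2 - ‖V (j+1) k - V j k‖ ^ 2) / 2 := by
    intro j k
    have e1 : (W (j+1) k + V (j+1) k)/2 - (W j k + V j k)/2
        = ((W (j+1) k - W j k) + (V (j+1) k - V j k))/2 := by ring
    have e2 : conj (W (j+1) k - V (j+1) k) - conj (W j k - V j k)
        = conj ((W (j+1) k - W j k) - (V (j+1) k - V j k)) := by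
      rw [← map_sub]; congr 1; ring
    rw [e1, e2, re_L2]
  have hpty : ∀ j k : ℕ,
      (((W j (k+1) + V j (k+1))/2 - (W j k + V j k)/2)
        * (conj (W j (k+1) - V j (k+1)) - conj (W j k - V j k))).re
      = (‖W j (k+1) - W j k‖ ^ 2 - ‖V j (k+1) - V j k‖ ^ 2) / 2 := by
    intro j k
    have e1 : (W j (k+1) + V j (k+1))/2 - (W j k + V j k)/2
        = ((W j (k+1) - W j k) + (V j (k+1) - V j k))/2 := by ring
    have e2 : conj (W j (k+1) - V j (k+1)) - conj (W j k - V j k)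
        = conj ((W j (k+1) - W j k) - (V j (k+1) - V j k)) := by
      rw [← map_sub]; congr 1; ring
    rw [e1, e2, re_L2]
  have hcast : ∀ t : ℝ, (((t:ℂ))^2)⁻¹ = (((t^2)⁻¹ : ℝ) : ℂ) := by
    intro t; push_cast; ring
  have hre2 : (∑ j ∈ Finset.Icc 1 (J-1), ∑ k ∈ Finset.Icc 1 (K-1),
      delta2 Δx Δy (fun j' k' => (W j' k' + V j' k')/2) j k * conj (W j k - V j k)).re
      = ∑ j ∈ Finset.range J, ∑ k ∈ Finset.range K,
          ((‖V (j+1) k - V j k‖ ^ 2 - ‖W (j+1) k - W j k‖ ^ 2) / (2*Δx^2)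
            + (‖V j (k+1) - V j k‖ ^ 2 - ‖W j (k+1) - W j k‖ ^ 2) / (2*Δy^2)) := by
    rw [hsplit2, Complex.add_re, hSx, hSy, hcast Δx, hcast Δy,
      Complex.re_ofReal_mul, Complex.re_ofReal_mul, Complex.neg_re, Complex.neg_re,
      Complex.re_sum, Complex.re_sum]
    simp only [Complex.re_sum, hptx, hpty]
    rw [show ∑ j ∈ Finset.range J, ∑ k ∈ Finset.range K,
          ((‖V (j+1) k - V j k‖ ^ 2 - ‖W (j+1) k - W j k‖ ^ 2) / (2*Δx^2)
            + (‖V j (k+1) - V j k‖ ^ 2 - ‖W j (k+1) - W j k‖ ^ 2) / (2*Δy^2))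
        = (-(Δx^2)⁻¹) * (∑ j ∈ Finset.range J, ∑ k ∈ Finset.range K,
            (‖W (j+1) k - W j k‖ ^ 2 - ‖V (j+1) k - V j k‖ ^ 2) / 2)
          + (-(Δy^2)⁻¹) * (∑ j ∈ Finset.range J, ∑ k ∈ Finset.range K,
            (‖W j (k+1) - W j k‖ ^ 2 - ‖V j (k+1) - V j k‖ ^ 2) / 2)
      from by
        simp only [Finset.mul_sum, ← Finset.sum_add_distrib]
        refine Finset.sum_congr rfl fun j _ => Finset.sum_congr rfl fun k _ => ?_
        field_simp
        ring]
    ring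
  -- assemble hre
  rw [hre1, hre2, hre3, hre4, hre5] at hre
  -- relate the gradient sums
  have habs : ∀ (u : ℂ) (t : ℝ), ‖u/(t:ℂ)‖ ^ 2 = ‖u‖ ^ 2 / t^2 := by
    intro u t; rw [norm_div, Complex.norm_real, Real.norm_eq_abs, div_pow, _root_.sq_abs]
  have hgradlink : ∑ j ∈ range J, ∑ k ∈ range K,
        (‖(V (j+1) k - V j k) / (Δx:ℂ)‖ ^ 2 + ‖(V j (k+1) - V j k) / (Δy:ℂ)‖ ^ 2)
      = 2 * (∑ j ∈ Finset.range J, ∑ k ∈ Finset.range K,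
          ((‖V (j+1) k - V j k‖ ^ 2 - ‖W (j+1) k - W j k‖ ^ 2) / (2*Δx^2)
            + (‖V j (k+1) - V j k‖ ^ 2 - ‖W j (k+1) - W j k‖ ^ 2) / (2*Δy^2)))
        + 1 * ∑ j ∈ range J, ∑ k ∈ range K,
          (‖(W (j+1) k - W j k) / (Δx:ℂ)‖ ^ 2 + ‖(W j (k+1) - W j k) / (Δy:ℂ)‖ ^ 2) := by
    simp only [Finset.mul_sum, ← Finset.sum_add_distrib]
    refine Finset.sum_congr rfl fun j _ => Finset.sum_congr rfl fun k _ => ?_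
    simp only [habs]
    field_simp
    ring
  -- final assembly
  simp only [energy, gradSq, normP]
  rw [Complex.im_ofReal_mul, Complex.im_sum]
  simp only [Complex.im_sum]
  linear_combination (-2*(Δx*Δy)) * hre + (-(Δx*Δy)) * hgradlink
end
end
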